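/- arXiv:1710.10533 — 3 statements merged into one kernel-verified Lean document; each statement's English description precedes it below -/
import Mathlib

section
/- Let m, r be natural numbers and let d_{pq}^{kl} ∈ ℂ (p,q ∈ {1,…,r}, k,l ∈ {1,…,m}) be any constants satisfying d_{pq}^{kl} = d_{qp}^{kl}. Let A be the quotient of the free unital associative ℂ-algebra on generators x_1,…,x_m, y_1,…,y_r by the two-sided ideal generated by the homogeneous quadratic relations x_i x_j − x_j x_i, x_i y_p − y_p x_i, and y_p y_q + y_q y_p − Σ_{k,l} d_{pq}^{kl} x_k x_l (for all i,j ∈ {1,…,m}, p,q ∈ {1,…,r}). Then the images in A of the ordered monomials x_1^{k_1} ⋯ x_m^{k_m} y_{p_1} ⋯ y_{p_s}, with k_1,…,k_m ≥ 0 and 1 ≤ p_1 < ⋯ < p_s ≤ r, form a ℂ-vector-space basis of A. -/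
open scoped BigOperators

namespace QSPbw

variable (m r : ℕ)

abbrev Rp := MvPolynomial (Fin m) ℂ
abbrev Ext := Finset (Fin r) →₀ Rp m

variable {r} in
def cnt (p : Fin r) (S : Finset (Fin r)) : ℕ := (S.filter (· < p)).card

variable {r} in
noncomputable def sgn (p : Fin r) (S : Finset (Fin r)) : Rp m := (-1) ^ cnt p S

variable {m r}

lemma cnt_insert {q : Fin r} {S : Finset (Fin r)} (h : q ∉ S) (p : Fin r) :
    cnt p (insert q S) = cnt p S + (if q < p then 1 else 0) := by
  classical
  rw [cnt, Finset.filter_insert]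
  split_ifs with h1
  · rw [Finset.card_insert_of_notMem (fun hc => h (Finset.mem_of_mem_filter _ hc))]; rfl
  · rfl

lemma cnt_erase {q : Fin r} {S : Finset (Fin r)} (h : q ∈ S) (p : Fin r) :
    cnt p S = cnt p (S.erase q) + (if q < p then 1 else 0) := by
  classical
  have := cnt_insert (Finset.notMem_erase q S) p
  rwa [Finset.insert_erase h] at this

lemma cnt_insert_self (p : Fin r) (S : Finset (Fin r)) : cnt p (insert p S) = cnt p S := by
  classical
  rw [cnt, Finset.filter_insert, if_neg (lt_irrefl p)]; rfl

lemma cnt_erase_self (p : Fin r) (S : Finset (Fin r)) : cnt p (S.erase p) = cnt p S := by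
  classical
  rw [cnt, cnt, Finset.filter_erase, Finset.erase_eq_of_notMem]
  intro hc
  exact absurd (Finset.mem_filter.1 hc).2 (lt_irrefl p)

lemma sgn_insert {q : Fin r} {S : Finset (Fin r)} (h : q ∉ S) (p : Fin r) :
    sgn m p (insert q S) = (if q < p then (-1 : Rp m) else 1) * sgn m p S := by
  rw [sgn, sgn, cnt_insert h p, pow_add]
  split_ifs <;> simp [mul_comm]

lemma sgn_erase {q : Fin r} {S : Finset (Fin r)} (h : q ∈ S) (p : Fin r) :
    sgn m p S = (if q < p then (-1 : Rp m) else 1) * sgn m p (S.erase q) := by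
  rw [sgn, sgn, cnt_erase h p, pow_add]
  split_ifs <;> simp [mul_comm]

lemma sgn_insert_self (p : Fin r) (S : Finset (Fin r)) : sgn m p (insert p S) = sgn m p S := by
  rw [sgn, sgn, cnt_insert_self]

lemma sgn_erase_self (p : Fin r) (S : Finset (Fin r)) : sgn m p (S.erase p) = sgn m p S := by
  rw [sgn, sgn, cnt_erase_self]

variable (m r) in
/-- creation operator -/
noncomputable def cR (p : Fin r) : Ext m r →ₗ[Rp m] Ext m r :=
  Finsupp.lsum (Rp m) fun S =>
    if p ∈ S then 0 else sgn m p S • Finsupp.lsingle (insert p S)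

variable (m r) in
/-- annihilation operator -/
noncomputable def aR (p : Fin r) : Ext m r →ₗ[Rp m] Ext m r :=
  Finsupp.lsum (Rp m) fun S =>
    if p ∈ S then sgn m p S • Finsupp.lsingle (S.erase p) else 0

lemma cR_single (p : Fin r) (S : Finset (Fin r)) (x : Rp m) :
    cR m r p (Finsupp.single S x) =
      if p ∈ S then 0 else sgn m p S • Finsupp.single (insert p S) x := by
  rw [cR, Finsupp.lsum_single]
  split_ifs <;> simp

lemma aR_single (p : Fin r) (S : Finset (Fin r)) (x : Rp m) :
    aR m r p (Finsupp.single S x) =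
      if p ∈ S then sgn m p S • Finsupp.single (S.erase p) x else 0 := by
  rw [aR, Finsupp.lsum_single]
  split_ifs <;> simp


variable {m r : ℕ}

variable (m r) in
abbrev E := Module.End ℂ (Ext m r)

variable (m r) in
noncomputable def cE (p : Fin r) : E m r := (cR m r p).restrictScalars ℂ

variable (m r) in
noncomputable def aE (p : Fin r) : E m r := (aR m r p).restrictScalars ℂ

variable (m r) in
noncomputable def muE : Rp m →ₐ[ℂ] E m r := Algebra.lsmul ℂ ℂ (Ext m r)

lemma muE_apply (x : Rp m) (v : Ext m r) : muE m r x v = x • v := rfl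

lemma cE_single (p : Fin r) (S : Finset (Fin r)) (x : Rp m) :
    cE m r p (Finsupp.single S x) =
      if p ∈ S then 0 else sgn m p S • Finsupp.single (insert p S) x := cR_single p S x

lemma aE_single (p : Fin r) (S : Finset (Fin r)) (x : Rp m) :
    aE m r p (Finsupp.single S x) =
      if p ∈ S then sgn m p S • Finsupp.single (S.erase p) x else 0 := aR_single p S x

lemma cE_smul (p : Fin r) (x : Rp m) (v : Ext m r) :
    cE m r p (x • v) = x • cE m r p v := (cR m r p).map_smul x v

lemma aE_smul (p : Fin r) (x : Rp m) (v : Ext m r) :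
    aE m r p (x • v) = x • aE m r p v := (aR m r p).map_smul x v

lemma muE_comm_cE (x : Rp m) (p : Fin r) :
    muE m r x * cE m r p = cE m r p * muE m r x := by
  apply LinearMap.ext; intro v
  exact ((cR m r p).map_smul x v).symm

lemma muE_comm_aE (x : Rp m) (p : Fin r) :
    muE m r x * aE m r p = aE m r p * muE m r x := by
  apply LinearMap.ext; intro v
  exact ((aR m r p).map_smul x v).symm

lemma car_cc (p q : Fin r) : cE m r p * cE m r q + cE m r q * cE m r p = 0 := by
  classical
  apply Finsupp.lhom_ext (fun S x => ?_)
  simp only [LinearMap.add_apply, Module.End.mul_apply, LinearMap.zero_apply]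
  by_cases hq : q ∈ S
  · rw [cE_single q, if_pos hq, map_zero]
    by_cases hp : p ∈ S
    · rw [cE_single p, if_pos hp, map_zero]; simp
    · rw [cE_single p, if_neg hp, cE_smul, cE_single q, if_pos (Finset.mem_insert_of_mem hq)]
      simp
  · by_cases hp : p ∈ S
    · rw [cE_single p, if_pos hp, map_zero, cE_single q, if_neg hq, cE_smul,
        cE_single p, if_pos (Finset.mem_insert_of_mem hp)]
      simp
    · rcases eq_or_ne p q with rfl | hpq
      · rw [cE_single p, if_neg hp, cE_smul, cE_single p, if_pos (Finset.mem_insert_self p S)]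
        simp
      · rw [cE_single q, if_neg hq, cE_smul, cE_single p,
          if_neg (by simp [Finset.mem_insert, hp, hpq]),
          cE_single p, if_neg hp, cE_smul, cE_single q,
          if_neg (by simp [Finset.mem_insert, hq, Ne.symm hpq]),
          Finset.insert_comm q p S, smul_smul, smul_smul, ← add_smul,
          sgn_insert hq p, sgn_insert hp q]
        convert zero_smul (Rp m) _
        rcases lt_or_gt_of_ne hpq with h | h
        · rw [if_neg (asymm h), if_pos h]; ring
        · rw [if_pos h, if_neg (asymm h)]; ring

lemma car_aa (p q : Fin r) : aE m r p * aE m r q + aE m r q * aE m r p = 0 := by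
  classical
  apply Finsupp.lhom_ext (fun S x => ?_)
  simp only [LinearMap.add_apply, Module.End.mul_apply, LinearMap.zero_apply]
  by_cases hq : q ∈ S
  · by_cases hp : p ∈ S
    · rcases eq_or_ne p q with rfl | hpq
      · rw [aE_single p, if_pos hp, aE_smul, aE_single p,
          if_neg (Finset.notMem_erase p S)]
        simp
      · rw [aE_single q, if_pos hq, aE_smul, aE_single p,
          if_pos (Finset.mem_erase.2 ⟨hpq, hp⟩),
          aE_single p, if_pos hp, aE_smul, aE_single q,
          if_pos (Finset.mem_erase.2 ⟨fun h => hpq h.symm, hq⟩),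
          Finset.erase_right_comm (a := q), smul_smul, smul_smul, ← add_smul]
        convert zero_smul (Rp m) _
        rw [sgn_erase hp q, sgn_erase hq p]
        rcases lt_or_gt_of_ne hpq with h | h
        · rw [if_pos h, if_neg (asymm h)]; ring
        · rw [if_neg (asymm h), if_pos h]; ring
    · rw [aE_single q, if_pos hq, aE_smul, aE_single p,
        if_neg (fun hc => hp (Finset.mem_of_mem_erase hc)), aE_single p, if_neg hp]
      simp
  · rw [aE_single q, if_neg hq, map_zero]
    by_cases hp : p ∈ S
    · rw [aE_single p, if_pos hp, aE_smul, aE_single q,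
        if_neg (fun hc => hq (Finset.mem_of_mem_erase hc))]
      simp
    · rw [aE_single p, if_neg hp]; simp


variable {m r : ℕ}

lemma sgn_mul_self (p : Fin r) (S : Finset (Fin r)) : sgn m p S * sgn m p S = 1 := by
  rw [sgn, ← pow_add, ← two_mul, pow_mul, neg_one_sq, one_pow]

lemma car_ac (p q : Fin r) :
    aE m r p * cE m r q + cE m r q * aE m r p = if p = q then 1 else 0 := by
  classical
  apply Finsupp.lhom_ext (fun S x => ?_)
  simp only [LinearMap.add_apply, Module.End.mul_apply]
  by_cases hq : q ∈ S
  · rw [cE_single q, if_pos hq, map_zero]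
    by_cases hp : p ∈ S
    · rcases eq_or_ne p q with rfl | hpq
      · rw [aE_single p, if_pos hp, cE_smul, cE_single p,
          if_neg (Finset.notMem_erase p S), sgn_erase_self, Finset.insert_erase hp,
          smul_smul, sgn_mul_self, if_pos rfl]
        simp
      · rw [aE_single p, if_pos hp, cE_smul, cE_single q,
          if_pos (Finset.mem_erase.2 ⟨Ne.symm hpq, hq⟩), if_neg hpq]
        simp
    · rw [aE_single p, if_neg hp, map_zero, if_neg (by rintro rfl; exact hp hq)]
      simp
  · rw [cE_single q, if_neg hq, aE_smul]
    by_cases hp : p ∈ S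
    · have hpq : p ≠ q := by rintro rfl; exact hq hp
      rw [aE_single p, if_pos (Finset.mem_insert_of_mem hp), aE_single p, if_pos hp,
        cE_smul, cE_single q,
        if_neg (fun hc => hq (Finset.mem_of_mem_erase hc)), if_neg hpq,
        Finset.erase_insert_of_ne (Ne.symm hpq), smul_smul, smul_smul, ← add_smul,
        sgn_insert hq p, sgn_erase hp q]
      convert zero_smul (Rp m) _
      rcases lt_or_gt_of_ne hpq with h | h
      · rw [if_neg (asymm h), if_pos h]; ring
      · rw [if_pos h, if_neg (asymm h)]; ring
      exact LinearMap.zero_apply _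
    · rcases eq_or_ne p q with rfl | hpq
      · rw [aE_single p, if_pos (Finset.mem_insert_self p S), aE_single p, if_neg hp,
          map_zero, add_zero, Finset.erase_insert hp, sgn_insert_self, smul_smul,
          sgn_mul_self, if_pos rfl]
        simp
      · rw [aE_single p, if_neg (by simp [Finset.mem_insert, hp, hpq]), aE_single p,
          if_neg hp]
        simp [hpq]


variable {m r : ℕ}

variable (m) in
noncomputable def Dhalf (d : Fin r → Fin r → Fin m → Fin m → ℂ) (p q : Fin r) : Rp m :=
  (2⁻¹ : ℂ) • ∑ a : Fin m, ∑ b : Fin m,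
    d p q a b • (MvPolynomial.X a * MvPolynomial.X b)

variable (m) in
noncomputable def Dfull (d : Fin r → Fin r → Fin m → Fin m → ℂ) (p q : Fin r) : Rp m :=
  ∑ a : Fin m, ∑ b : Fin m, d p q a b • (MvPolynomial.X a * MvPolynomial.X b)

lemma Dhalf_add_Dhalf (d : Fin r → Fin r → Fin m → Fin m → ℂ)
    (hd : ∀ p q k l, d p q k l = d q p k l) (p q : Fin r) :
    Dhalf m d q p + Dhalf m d p q = Dfull m d p q := by
  have h : Dhalf m d q p = Dhalf m d p q := by
    unfold Dhalf
    congr 1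
    exact Finset.sum_congr rfl fun a _ => Finset.sum_congr rfl fun b _ => by rw [hd q p a b]
  rw [h, Dhalf, ← add_smul]
  norm_num
  rfl

variable (m r) in
noncomputable def yE (d : Fin r → Fin r → Fin m → Fin m → ℂ) (p : Fin r) : E m r :=
  cE m r p + ∑ s : Fin r, muE m r (Dhalf m d p s) * aE m r s

lemma muE_comm_yE (x : Rp m) (d : Fin r → Fin r → Fin m → Fin m → ℂ) (p : Fin r) :
    muE m r x * yE m r d p = yE m r d p * muE m r x := by
  rw [yE, mul_add, add_mul, muE_comm_cE, Finset.mul_sum, Finset.sum_mul]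
  congr 1
  refine Finset.sum_congr rfl fun s _ => ?_
  rw [← mul_assoc, ← map_mul, mul_comm x, map_mul, mul_assoc, muE_comm_aE, ← mul_assoc]

lemma cross_term (p : Fin r) (Df : Fin r → Rp m) :
    cE m r p * (∑ s : Fin r, muE m r (Df s) * aE m r s) +
      (∑ s : Fin r, muE m r (Df s) * aE m r s) * cE m r p = muE m r (Df p) := by
  rw [Finset.mul_sum, Finset.sum_mul, ← Finset.sum_add_distrib]
  have h : ∀ s : Fin r, cE m r p * (muE m r (Df s) * aE m r s) +
      muE m r (Df s) * aE m r s * cE m r p =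
      if s = p then muE m r (Df s) else 0 := by
    intro s
    rw [← mul_assoc, ← muE_comm_cE, mul_assoc, mul_assoc, ← mul_add, add_comm,
      car_ac s p]
    split_ifs <;> simp
  rw [Finset.sum_congr rfl fun s _ => h s, Finset.sum_ite_eq' Finset.univ p
    (fun s => muE m r (Df s)), if_pos (Finset.mem_univ p)]

lemma aa_term (Df Dg : Fin r → Rp m) :
    (∑ s : Fin r, muE m r (Df s) * aE m r s) * (∑ t : Fin r, muE m r (Dg t) * aE m r t) +
      (∑ t : Fin r, muE m r (Dg t) * aE m r t) * (∑ s : Fin r, muE m r (Df s) * aE m r s)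
      = 0 := by
  rw [Finset.sum_mul_sum, Finset.sum_mul_sum]
  rw [Finset.sum_comm (s := Finset.univ) (t := Finset.univ)
    (f := fun t s => (muE m r (Dg t) * aE m r t) * (muE m r (Df s) * aE m r s)),
    ← Finset.sum_add_distrib]
  refine Finset.sum_eq_zero fun s _ => ?_
  rw [← Finset.sum_add_distrib]
  refine Finset.sum_eq_zero fun t _ => ?_
  have key : ∀ (a b : Rp m) (s t : Fin r),
      muE m r a * aE m r s * (muE m r b * aE m r t) =
        muE m r (a * b) * (aE m r s * aE m r t) := by
    intro a b s t
    rw [map_mul, mul_assoc, ← mul_assoc (aE m r s), ← muE_comm_aE, mul_assoc, ← mul_assoc]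
  rw [key (Df s) (Dg t) s t, key (Dg t) (Df s) t s, mul_comm (Dg t) (Df s),
    ← mul_add, car_aa, mul_zero]

lemma y_anticomm (d : Fin r → Fin r → Fin m → Fin m → ℂ)
    (hd : ∀ p q k l, d p q k l = d q p k l) (p q : Fin r) :
    yE m r d p * yE m r d q + yE m r d q * yE m r d p = muE m r (Dfull m d p q) := by
  have expand : ∀ c₁ c₂ A₁ A₂ : E m r,
      (c₁ + A₁) * (c₂ + A₂) + (c₂ + A₂) * (c₁ + A₁) =
      (c₁ * c₂ + c₂ * c₁) + ((c₁ * A₂ + A₂ * c₁) + ((c₂ * A₁ + A₁ * c₂) +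
        (A₁ * A₂ + A₂ * A₁))) := by
    intros; noncomm_ring
  rw [yE, yE, expand, car_cc, cross_term, cross_term, aa_term, add_zero, zero_add,
    ← map_add, Dhalf_add_Dhalf d hd p q]


end QSPbw

/-- The homogeneous quadratic relations of a homogeneous quadratic superalgebra with
even generators `x i` (`i : Fin m`, encoded `Sum.inl i`) and odd generators `y p`
(`p : Fin r`, encoded `Sum.inr p`). -/
inductive QSRel (m r : ℕ) (d : Fin r → Fin r → Fin m → Fin m → ℂ) :
    FreeAlgebra ℂ (Fin m ⊕ Fin r) → FreeAlgebra ℂ (Fin m ⊕ Fin r) → Prop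
  | evenEven (i j : Fin m) :
      QSRel m r d
        (FreeAlgebra.ι ℂ (Sum.inl i) * FreeAlgebra.ι ℂ (Sum.inl j))
        (FreeAlgebra.ι ℂ (Sum.inl j) * FreeAlgebra.ι ℂ (Sum.inl i))
  | evenOdd (i : Fin m) (p : Fin r) :
      QSRel m r d
        (FreeAlgebra.ι ℂ (Sum.inl i) * FreeAlgebra.ι ℂ (Sum.inr p))
        (FreeAlgebra.ι ℂ (Sum.inr p) * FreeAlgebra.ι ℂ (Sum.inl i))
  | oddOdd (p q : Fin r) :
      QSRel m r d
        (FreeAlgebra.ι ℂ (Sum.inr p) * FreeAlgebra.ι ℂ (Sum.inr q) +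
          FreeAlgebra.ι ℂ (Sum.inr q) * FreeAlgebra.ι ℂ (Sum.inr p))
        (∑ k : Fin m, ∑ l : Fin m,
          d p q k l • (FreeAlgebra.ι ℂ (Sum.inl k) * FreeAlgebra.ι ℂ (Sum.inl l)))

/-- The homogeneous quadratic superalgebra: quotient of the free algebra by the
two-sided ideal generated by the relations. -/
noncomputable abbrev QSAlgebra (m r : ℕ) (d : Fin r → Fin r → Fin m → Fin m → ℂ) :=
  RingQuot (QSRel m r d)

/-- Images of the generators in the quotient. -/
noncomputable def qsGen (m r : ℕ) (d : Fin r → Fin r → Fin m → Fin m → ℂ)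
    (g : Fin m ⊕ Fin r) : QSAlgebra m r d :=
  RingQuot.mkAlgHom ℂ (QSRel m r d) (FreeAlgebra.ι ℂ g)

/-- The ordered monomial `x 0 ^ k 0 * ⋯ * x (m-1) ^ k (m-1) * y p₁ * ⋯ * y pₛ`,
indexed by the exponent vector `k` and the set `{p₁ < ⋯ < pₛ}` of odd indices. -/
noncomputable def qsMonomial (m r : ℕ) (d : Fin r → Fin r → Fin m → Fin m → ℂ)
    (idx : (Fin m → ℕ) × Finset (Fin r)) : QSAlgebra m r d :=
  (((List.finRange m).map fun i => qsGen m r d (Sum.inl i) ^ idx.1 i).prod) *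
    ((idx.2.sort (· ≤ ·)).map fun p => qsGen m r d (Sum.inr p)).prod


namespace QSPbw

open MvPolynomial

variable {m r : ℕ} {d : Fin r → Fin r → Fin m → Fin m → ℂ}

variable (m r d) in
noncomputable def qsRhoF : FreeAlgebra ℂ (Fin m ⊕ Fin r) →ₐ[ℂ] E m r :=
  FreeAlgebra.lift ℂ (Sum.elim (fun i => muE m r (MvPolynomial.X i)) (fun p => yE m r d p))

lemma qsRhoF_rel (hd : ∀ p q k l, d p q k l = d q p k l) :
    ∀ ⦃x y : FreeAlgebra ℂ (Fin m ⊕ Fin r)⦄, QSRel m r d x y → qsRhoF m r d x = qsRhoF m r d y := by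
  intro x y h
  induction h with
  | evenEven i j =>
      simp only [qsRhoF, map_mul, FreeAlgebra.lift_ι_apply, Sum.elim_inl]
      rw [← map_mul, ← map_mul, mul_comm]
  | evenOdd i p =>
      simp only [qsRhoF, map_mul, FreeAlgebra.lift_ι_apply, Sum.elim_inl, Sum.elim_inr]
      exact muE_comm_yE _ d p
  | oddOdd p q =>
      simp only [qsRhoF, map_add, map_mul, map_sum, map_smul, FreeAlgebra.lift_ι_apply,
        Sum.elim_inl, Sum.elim_inr]
      rw [y_anticomm d hd p q, Dfull]
      simp only [map_sum, map_smul, map_mul]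

variable (m r d) in
noncomputable def qsRho (hd : ∀ p q k l, d p q k l = d q p k l) :
    QSAlgebra m r d →ₐ[ℂ] E m r :=
  RingQuot.liftAlgHom ℂ ⟨qsRhoF m r d, qsRhoF_rel hd⟩

lemma qsRho_gen (hd : ∀ p q k l, d p q k l = d q p k l) (g : Fin m ⊕ Fin r) :
    qsRho m r d hd (qsGen m r d g) =
      Sum.elim (fun i => muE m r (MvPolynomial.X i)) (fun p => yE m r d p) g := by
  rw [qsGen, qsRho, RingQuot.liftAlgHom_mkAlgHom_apply, qsRhoF, FreeAlgebra.lift_ι_apply]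

end QSPbw
namespace QSPbw

variable {m r : ℕ} {d : Fin r → Fin r → Fin m → Fin m → ℂ}

variable (m r) in
noncomputable def Fil (n : ℕ) : Submodule (Rp m) (Ext m r) :=
  Submodule.span (Rp m) {v | ∃ U x, U.card < n ∧ v = Finsupp.single U x}

lemma single_mem_fil {U : Finset (Fin r)} {x : Rp m} {n : ℕ} (h : U.card < n) :
    Finsupp.single U x ∈ Fil m r n := Submodule.subset_span ⟨U, x, h, rfl⟩

lemma fil_mono {n n' : ℕ} (h : n ≤ n') : Fil m r n ≤ Fil m r n' :=
  Submodule.span_mono fun v ⟨U, x, hc, he⟩ => ⟨U, x, lt_of_lt_of_le hc h, he⟩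

lemma fil_apply_eq_zero {v : Ext m r} {n : ℕ} (hv : v ∈ Fil m r n)
    {U : Finset (Fin r)} (h : n ≤ U.card) : v U = 0 := by
  induction hv using Submodule.span_induction with
  | mem w hw =>
      obtain ⟨U', x, hc, rfl⟩ := hw
      rw [Finsupp.single_apply, if_neg]
      rintro rfl
      exact absurd h (not_le.2 hc)
  | zero => rfl
  | add w₁ w₂ _ _ h1 h2 => rw [Finsupp.add_apply, h1, h2, add_zero]
  | smul c w _ hw => rw [Finsupp.smul_apply, hw, smul_zero]

lemma cE_fil {v : Ext m r} {n : ℕ} (hv : v ∈ Fil m r n) (p : Fin r) :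
    cE m r p v ∈ Fil m r (n + 1) := by
  induction hv using Submodule.span_induction with
  | mem w hw =>
      obtain ⟨U, x, hc, rfl⟩ := hw
      rw [cE_single]
      split_ifs
      · exact Submodule.zero_mem _
      · exact Submodule.smul_mem _ _ (single_mem_fil
          (lt_of_le_of_lt (Finset.card_insert_le p U) (Nat.succ_lt_succ hc)))
  | zero => rw [map_zero]; exact Submodule.zero_mem _
  | add w₁ w₂ _ _ h1 h2 => rw [map_add]; exact Submodule.add_mem _ h1 h2
  | smul c w _ hw => rw [cE_smul]; exact Submodule.smul_mem _ _ hw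

lemma aE_fil {v : Ext m r} {n : ℕ} (hv : v ∈ Fil m r n) (p : Fin r) :
    aE m r p v ∈ Fil m r n := by
  induction hv using Submodule.span_induction with
  | mem w hw =>
      obtain ⟨U, x, hc, rfl⟩ := hw
      rw [aE_single]
      split_ifs
      · exact Submodule.smul_mem _ _ (single_mem_fil
          (lt_of_le_of_lt (Finset.card_erase_le) hc))
      · exact Submodule.zero_mem _
  | zero => rw [map_zero]; exact Submodule.zero_mem _
  | add w₁ w₂ _ _ h1 h2 => rw [map_add]; exact Submodule.add_mem _ h1 h2
  | smul c w _ hw => rw [aE_smul]; exact Submodule.smul_mem _ _ hw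

lemma yE_apply (p : Fin r) (v : Ext m r) :
    yE m r d p v = cE m r p v + ∑ s : Fin r, muE m r (Dhalf m d p s) (aE m r s v) := by
  rw [yE, LinearMap.add_apply, LinearMap.sum_apply]
  rfl

lemma yE_fil {v : Ext m r} {n : ℕ} (hv : v ∈ Fil m r n) (p : Fin r) :
    yE m r d p v ∈ Fil m r (n + 1) := by
  rw [yE_apply]
  refine Submodule.add_mem _ (cE_fil hv p) (Submodule.sum_mem _ fun s _ => ?_)
  rw [muE_apply]
  exact Submodule.smul_mem _ _ (fil_mono (Nat.le_succ n) (aE_fil hv s))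

variable (m r) in
noncomputable def vac : Ext m r := Finsupp.single ∅ 1

lemma yE_single_big (p : Fin r) (T : Finset (Fin r)) (hT : ∀ q ∈ T, p < q) :
    ∃ e ∈ Fil m r T.card,
      yE m r d p (Finsupp.single T 1) = Finsupp.single (insert p T) 1 + e := by
  have hp : p ∉ T := fun h => lt_irrefl p (hT p h)
  have hcnt : cnt p T = 0 := by
    rw [cnt, Finset.card_eq_zero, Finset.filter_eq_empty_iff]
    exact fun {q} hq => asymm (hT q hq)
  refine ⟨∑ s : Fin r, muE m r (Dhalf m d p s) (aE m r s (Finsupp.single T 1)), ?_, ?_⟩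
  · refine Submodule.sum_mem _ fun s _ => ?_
    rw [muE_apply, aE_single]
    split_ifs with hs
    · refine Submodule.smul_mem _ _ (Submodule.smul_mem _ _ (single_mem_fil ?_))
      exact Finset.card_erase_lt_of_mem hs
    · rw [smul_zero]; exact Submodule.zero_mem _
  · rw [yE_apply, cE_single, if_neg hp, sgn, hcnt, pow_zero, one_smul]

lemma yprod_vac (L : List (Fin r)) (hL : L.Pairwise (· < ·)) :
    ∃ e ∈ Fil m r L.length,
      ((L.map (yE m r d)).prod) (vac m r) = Finsupp.single L.toFinset 1 + e := by
  induction L with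
  | nil => exact ⟨0, Submodule.zero_mem _, by simp [vac]⟩
  | cons p L' ih =>
      obtain ⟨hpL, hL'⟩ := List.pairwise_cons.mp hL
      obtain ⟨e, he, heq⟩ := ih hL'
      obtain ⟨e1, he1, heq1⟩ :=
        yE_single_big (d := d) p L'.toFinset (fun q hq => hpL q (List.mem_toFinset.mp hq))
      refine ⟨e1 + yE m r d p e, ?_, ?_⟩
      · refine Submodule.add_mem _ (fil_mono ?_ he1) (yE_fil he p)
        exact le_trans L'.toFinset_card_le (Nat.le_succ _)
      · rw [List.map_cons, List.prod_cons, Module.End.mul_apply, heq, map_add, heq1,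
          List.toFinset_cons, add_assoc]

end QSPbw
namespace QSPbw

open MvPolynomial

variable {m r : ℕ} {d : Fin r → Fin r → Fin m → Fin m → ℂ}

variable (m) in
noncomputable def Pk (k : Fin m → ℕ) : Rp m :=
  ((List.finRange m).map fun i => (MvPolynomial.X i : Rp m) ^ k i).prod

lemma Pk_eq_monomial (k : Fin m → ℕ) :
    Pk m k = monomial (∑ j : Fin m, Finsupp.single j (k j)) 1 := by
  rw [Pk, ← Fin.prod_univ_def, monomial_sum_one]
  exact Finset.prod_congr rfl fun i _ => X_pow_eq_monomial

lemma sum_single_apply (k : Fin m → ℕ) (i : Fin m) :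
    (∑ j : Fin m, Finsupp.single j (k j)) i = k i := by
  classical
  rw [Finset.sum_apply']
  rw [Finset.sum_congr rfl fun j _ => Finsupp.single_apply]
  rw [Finset.sum_ite_eq' Finset.univ i k, if_pos (Finset.mem_univ i)]

lemma coeff_Pk (k k₀ : Fin m → ℕ) :
    MvPolynomial.coeff (∑ j : Fin m, Finsupp.single j (k₀ j)) (Pk m k) =
      if k = k₀ then 1 else 0 := by
  rw [Pk_eq_monomial, coeff_monomial]
  congr 1
  simp only [eq_iff_iff]
  constructor
  · intro h
    funext i
    have := congrArg (fun v => v i) h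
    simpa [sum_single_apply] using this
  · rintro rfl; rfl

lemma qsRho_xpart (hd : ∀ p q k l, d p q k l = d q p k l) (k : Fin m → ℕ) :
    qsRho m r d hd (((List.finRange m).map fun i => qsGen m r d (Sum.inl i) ^ k i).prod)
      = muE m r (Pk m k) := by
  rw [map_list_prod, List.map_map, Pk, map_list_prod (muE m r), List.map_map]
  congr 1
  apply List.map_congr_left
  intro i _
  simp only [Function.comp_apply, map_pow, qsRho_gen hd, Sum.elim_inl]

lemma qsRho_ypart (hd : ∀ p q k l, d p q k l = d q p k l) (T : Finset (Fin r)) :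
    qsRho m r d hd (((T.sort (· ≤ ·)).map fun p => qsGen m r d (Sum.inr p)).prod)
      = ((T.sort (· ≤ ·)).map (yE m r d)).prod := by
  rw [map_list_prod, List.map_map]
  congr 1
  apply List.map_congr_left
  intro p _
  simp only [Function.comp_apply, qsRho_gen hd, Sum.elim_inr]

lemma rho_monomial_vac (hd : ∀ p q k l, d p q k l = d q p k l)
    (idx : (Fin m → ℕ) × Finset (Fin r)) :
    ∃ e ∈ Fil m r idx.2.card,
      qsRho m r d hd (qsMonomial m r d idx) (vac m r) =
        Finsupp.single idx.2 (Pk m idx.1) + e := by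
  obtain ⟨k, T⟩ := idx
  obtain ⟨e, he, heq⟩ := yprod_vac (d := d) (T.sort (· ≤ ·)) (Finset.sortedLT_sort T).pairwise
  rw [Finset.sort_toFinset] at heq
  rw [Finset.length_sort] at he
  refine ⟨Pk m k • e, Submodule.smul_mem _ _ he, ?_⟩
  rw [qsMonomial, map_mul, Module.End.mul_apply, qsRho_ypart hd, qsRho_xpart hd, heq,
    muE_apply, smul_add, Finsupp.smul_single, smul_eq_mul, mul_one]

end QSPbw
namespace QSPbw

open MvPolynomial

variable {m r : ℕ} {d : Fin r → Fin r → Fin m → Fin m → ℂ}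

theorem qs_linearIndependent (hd : ∀ p q k l, d p q k l = d q p k l) :
    LinearIndependent ℂ (qsMonomial m r d) := by
  classical
  let Λ : QSAlgebra m r d →ₗ[ℂ] Ext m r :=
    { toFun := fun u => qsRho m r d hd u (vac m r)
      map_add' := fun a b => by simp only [map_add, LinearMap.add_apply]
      map_smul' := fun c a => by simp only [map_smul, LinearMap.smul_apply, RingHom.id_apply] }
  refine LinearIndependent.of_comp Λ ?_
  rw [linearIndependent_iff]
  intro l hl
  by_contra hne
  obtain ⟨i₀, hi₀, hmax⟩ := Finset.exists_max_image l.support (fun idx => idx.2.card)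
    (Finsupp.support_nonempty_iff.mpr hne)
  choose err herr heqw using rho_monomial_vac (d := d) hd
  let k0 : Fin m →₀ ℕ := ∑ j : Fin m, Finsupp.single j (i₀.1 j)
  let φ : Ext m r →ₗ[ℂ] ℂ :=
    (MvPolynomial.lcoeff ℂ k0).comp (Finsupp.lapply i₀.2 : Ext m r →ₗ[ℂ] Rp m)
  have key : ∀ idx ∈ l.support,
      φ (Λ (qsMonomial m r d idx)) = if idx = i₀ then 1 else 0 := by
    intro idx hmem
    have hΛ : Λ (qsMonomial m r d idx) = Finsupp.single idx.2 (Pk m idx.1) + err idx :=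
      heqw idx
    have herr0 : (err idx) i₀.2 = 0 := fil_apply_eq_zero (herr idx) (hmax idx hmem)
    rw [hΛ]
    simp only [φ, LinearMap.comp_apply, Finsupp.lapply_apply, Finsupp.add_apply, herr0,
      add_zero, Finsupp.single_apply]
    by_cases h2 : idx.2 = i₀.2
    · rw [if_pos h2, lcoeff_apply, coeff_Pk]
      by_cases h1 : idx.1 = i₀.1
      · rw [if_pos h1, if_pos (Prod.ext h1 h2)]
      · rw [if_neg h1, if_neg (fun h => h1 (congrArg Prod.fst h))]
    · rw [if_neg h2, map_zero, if_neg (fun h => h2 (congrArg Prod.snd h))]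
  have h0 : φ (Finsupp.linearCombination ℂ (⇑Λ ∘ qsMonomial m r d) l) = 0 := by
    rw [hl, map_zero]
  rw [Finsupp.linearCombination_apply, Finsupp.sum, map_sum] at h0
  have hs : ∑ idx ∈ l.support, φ (l idx • (⇑Λ ∘ qsMonomial m r d) idx) = l i₀ := by
    calc ∑ idx ∈ l.support, φ (l idx • (⇑Λ ∘ qsMonomial m r d) idx)
        = ∑ idx ∈ l.support, if idx = i₀ then l idx else 0 := by
          refine Finset.sum_congr rfl fun idx hmem => ?_
          rw [map_smul, Function.comp_apply, key idx hmem, smul_eq_mul]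
          split_ifs <;> simp
      _ = l i₀ := by
          rw [Finset.sum_ite_eq' l.support i₀ (fun idx => l idx), if_pos hi₀]
  exact (Finsupp.mem_support_iff.mp hi₀) (hs ▸ h0)

end QSPbw
namespace QSPbw

variable {m r : ℕ} {d : Fin r → Fin r → Fin m → Fin m → ℂ}

variable (m r d) in
noncomputable def gX (i : Fin m) : QSAlgebra m r d := qsGen m r d (Sum.inl i)

variable (m r d) in
noncomputable def gY (p : Fin r) : QSAlgebra m r d := qsGen m r d (Sum.inr p)

variable (m r d) in
noncomputable def xprod (k : Fin m → ℕ) : QSAlgebra m r d :=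
  ((List.finRange m).map fun i => gX m r d i ^ k i).prod

variable (m r d) in
noncomputable def ysort (T : Finset (Fin r)) : QSAlgebra m r d :=
  ((T.sort (· ≤ ·)).map (gY m r d)).prod

lemma qsMonomial_eq (idx : (Fin m → ℕ) × Finset (Fin r)) :
    qsMonomial m r d idx = xprod m r d idx.1 * ysort m r d idx.2 := rfl

lemma X_commute (i : Fin m) (u : QSAlgebra m r d) : Commute (gX m r d i) u := by
  obtain ⟨z, rfl⟩ := RingQuot.mkAlgHom_surjective ℂ (QSRel m r d) u
  induction z using FreeAlgebra.induction with
  | grade0 c =>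
      rw [AlgHom.commutes]
      exact (Algebra.commutes c _).symm
  | grade1 g =>
      cases g with
      | inl j =>
          have h := RingQuot.mkAlgHom_rel ℂ (QSRel.evenEven (m := m) (r := r) (d := d) i j)
          rw [map_mul, map_mul] at h
          exact h
      | inr p =>
          have h := RingQuot.mkAlgHom_rel ℂ (QSRel.evenOdd (m := m) (r := r) (d := d) i p)
          rw [map_mul, map_mul] at h
          exact h
  | mul a b ha hb => rw [map_mul]; exact ha.mul_right hb
  | add a b ha hb => rw [map_add]; exact ha.add_right hb

lemma YY_rel (p q : Fin r) :
    gY m r d p * gY m r d q + gY m r d q * gY m r d p =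
      ∑ a : Fin m, ∑ b : Fin m, d p q a b • (gX m r d a * gX m r d b) := by
  have h := RingQuot.mkAlgHom_rel ℂ (QSRel.oddOdd (m := m) (r := r) (d := d) p q)
  simp only [map_add, map_mul, map_sum, map_smul] at h
  exact h

lemma X_mul_list (i : Fin m) (k : Fin m → ℕ) :
    ∀ L : List (Fin m), L.Nodup → i ∈ L →
      gX m r d i * (L.map fun j => gX m r d j ^ k j).prod
        = (L.map fun j => gX m r d j ^ (Function.update k i (k i + 1)) j).prod := by
  intro L
  induction L with
  | nil => simp
  | cons j L' ih =>
      intro hnd hmem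
      rw [List.map_cons, List.prod_cons, List.map_cons, List.prod_cons]
      rcases eq_or_ne j i with rfl | hij
      · have hiL' : j ∉ L' := (List.nodup_cons.mp hnd).1
        rw [← mul_assoc, ← pow_succ', Function.update_self]
        congr 1
        refine congrArg List.prod (List.map_congr_left fun a haL' => ?_)
        rw [Function.update_of_ne (by rintro rfl; exact hiL' haL')]
      · have hmem' : i ∈ L' := by
          rcases List.mem_cons.mp hmem with h | h
          · exact absurd h.symm hij
          · exact h
        rw [← mul_assoc, (X_commute i (gX m r d j ^ k j)).eq, mul_assoc,
          ih (List.nodup_cons.mp hnd).2 hmem', Function.update_of_ne hij]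

lemma X_mul_monomial (i : Fin m) (k : Fin m → ℕ) (T : Finset (Fin r)) :
    gX m r d i * qsMonomial m r d (k, T) =
      qsMonomial m r d (Function.update k i (k i + 1), T) := by
  rw [qsMonomial_eq, qsMonomial_eq, ← mul_assoc]
  congr 1
  exact X_mul_list i k (List.finRange m) (List.nodup_finRange m) (List.mem_finRange i)

variable (m r d) in
noncomputable def SpanU (V : Finset (Fin r)) : Submodule ℂ (QSAlgebra m r d) :=
  Submodule.span ℂ (qsMonomial m r d '' {idx | idx.2 ⊆ V})

lemma monomial_mem_spanU {idx : (Fin m → ℕ) × Finset (Fin r)} {V : Finset (Fin r)}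
    (h : idx.2 ⊆ V) : qsMonomial m r d idx ∈ SpanU m r d V :=
  Submodule.subset_span ⟨idx, h, rfl⟩

lemma spanU_mono {V V' : Finset (Fin r)} (h : V ⊆ V') : SpanU m r d V ≤ SpanU m r d V' :=
  Submodule.span_mono (Set.image_mono fun idx hi => subset_trans hi h)

lemma X_mul_spanU (i : Fin m) {V : Finset (Fin r)} {u : QSAlgebra m r d}
    (hu : u ∈ SpanU m r d V) : gX m r d i * u ∈ SpanU m r d V := by
  induction hu using Submodule.span_induction with
  | mem w hw =>
      obtain ⟨⟨k, T⟩, hT, rfl⟩ := hw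
      rw [X_mul_monomial]
      exact monomial_mem_spanU hT
  | zero => rw [mul_zero]; exact Submodule.zero_mem _
  | add a b _ _ ha hb => rw [mul_add]; exact Submodule.add_mem _ ha hb
  | smul c a _ ha => rw [mul_smul_comm]; exact Submodule.smul_mem _ _ ha

lemma Xpow_mul_spanU (i : Fin m) (n : ℕ) {V : Finset (Fin r)} {u : QSAlgebra m r d}
    (hu : u ∈ SpanU m r d V) : gX m r d i ^ n * u ∈ SpanU m r d V := by
  induction n with
  | zero => rw [pow_zero, one_mul]; exact hu
  | succ n ih => rw [pow_succ', mul_assoc]; exact X_mul_spanU i ih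

lemma xprod_mul_spanU (k : Fin m → ℕ) {V : Finset (Fin r)} {u : QSAlgebra m r d}
    (hu : u ∈ SpanU m r d V) : xprod m r d k * u ∈ SpanU m r d V := by
  rw [xprod]
  induction (List.finRange m) with
  | nil => rw [List.map_nil, List.prod_nil, one_mul]; exact hu
  | cons j L ih =>
      rw [List.map_cons, List.prod_cons, mul_assoc]
      exact Xpow_mul_spanU j (k j) ih

lemma xprod_zero : xprod m r d (fun _ => 0) = 1 := by
  rw [xprod]
  apply List.prod_eq_one
  intro x hx
  obtain ⟨i, _, rfl⟩ := List.mem_map.mp hx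
  exact pow_zero _

lemma ysort_eq_monomial (T : Finset (Fin r)) :
    ysort m r d T = qsMonomial m r d ((fun _ => 0), T) := by
  rw [qsMonomial_eq, xprod_zero, one_mul]

lemma ysort_mem_spanU {T V : Finset (Fin r)} (h : T ⊆ V) :
    ysort m r d T ∈ SpanU m r d V := by
  rw [ysort_eq_monomial]
  exact monomial_mem_spanU h

lemma ysort_cons {T : Finset (Fin r)} {q : Fin r} (hq : q ∈ T) (hmin : ∀ b ∈ T, q ≤ b) :
    ysort m r d T = gY m r d q * ysort m r d (T.erase q) := by
  have hsort : T.sort (· ≤ ·) = q :: (T.erase q).sort (· ≤ ·) := by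
    conv_lhs => rw [← Finset.insert_erase hq]
    exact Finset.sort_insert (· ≤ ·) (fun b hb => hmin b (Finset.mem_of_mem_erase hb))
      (Finset.notMem_erase q T)
  rw [ysort, hsort, List.map_cons, List.prod_cons, ysort]

lemma ysort_insert {T : Finset (Fin r)} {p : Fin r} (hp : p ∉ T) (hmin : ∀ b ∈ T, p ≤ b) :
    gY m r d p * ysort m r d T = ysort m r d (insert p T) := by
  rw [ysort, ysort, Finset.sort_insert (· ≤ ·) hmin hp, List.map_cons, List.prod_cons]

end QSPbw
namespace QSPbw

variable {m r : ℕ} {d : Fin r → Fin r → Fin m → Fin m → ℂ}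

lemma D_mul_mem {V : Finset (Fin r)} {u : QSAlgebra m r d} (p q : Fin r)
    (hu : u ∈ SpanU m r d V) :
    (∑ a : Fin m, ∑ b : Fin m, d p q a b • (gX m r d a * gX m r d b)) * u
      ∈ SpanU m r d V := by
  rw [Finset.sum_mul]
  refine Submodule.sum_mem _ fun a _ => ?_
  rw [Finset.sum_mul]
  refine Submodule.sum_mem _ fun b _ => ?_
  rw [smul_mul_assoc, mul_assoc]
  exact Submodule.smul_mem _ _ (X_mul_spanU a (X_mul_spanU b hu))

lemma Y_mul_ysort (c : ℕ) : ∀ (p : Fin r) (T : Finset (Fin r)),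
    (T.filter (· < p)).card = c →
    gY m r d p * ysort m r d T ∈ SpanU m r d (insert p T) := by
  induction c using Nat.strong_induction_on with
  | _ c IH =>
  intro p T hc
  rcases Nat.eq_zero_or_pos c with rfl | hcpos
  · have hnolt : ∀ q ∈ T, ¬q < p := by
      rw [Finset.card_eq_zero, Finset.filter_eq_empty_iff] at hc
      exact fun q hq => hc hq
    by_cases hp : p ∈ T
    · have hmin : ∀ b ∈ T, p ≤ b := fun b hb => not_lt.1 (hnolt b hb)
      rw [ysort_cons hp hmin, ← mul_assoc]
      have hsmul : (2⁻¹ : ℂ) • (gY m r d p * gY m r d p + gY m r d p * gY m r d p)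
          = gY m r d p * gY m r d p := by
        rw [← two_smul ℂ, smul_smul]
        norm_num
      have h2 : gY m r d p * gY m r d p =
          (2⁻¹ : ℂ) • ∑ a : Fin m, ∑ b : Fin m, d p p a b • (gX m r d a * gX m r d b) := by
        rw [← hsmul, YY_rel p p]
      rw [h2, smul_mul_assoc]
      refine Submodule.smul_mem _ _ (D_mul_mem p p (ysort_mem_spanU ?_))
      exact subset_trans (Finset.erase_subset p T) (Finset.subset_insert p T)
    · have hmin : ∀ b ∈ T, p ≤ b := fun b hb => not_lt.1 (hnolt b hb)
      rw [ysort_insert hp hmin]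
      exact ysort_mem_spanU (subset_refl _)
  · have hne : (T.filter (· < p)).Nonempty := by
      rw [← Finset.card_pos, hc]; exact hcpos
    obtain ⟨q0, hq0⟩ := hne
    have hq0T : q0 ∈ T := (Finset.mem_filter.mp hq0).1
    have hTne : T.Nonempty := ⟨q0, hq0T⟩
    set q := T.min' hTne with hqdef
    have hqT : q ∈ T := T.min'_mem hTne
    have hqp : q < p :=
      lt_of_le_of_lt (T.min'_le q0 hq0T) (Finset.mem_filter.mp hq0).2
    have hmin : ∀ b ∈ T, q ≤ b := fun b hb => T.min'_le b hb
    rw [ysort_cons hqT hmin, ← mul_assoc,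
      eq_sub_of_add_eq (YY_rel (m := m) (r := r) (d := d) p q), sub_mul]
    refine Submodule.sub_mem _ ?_ ?_
    · exact D_mul_mem p q (ysort_mem_spanU
        (subset_trans (Finset.erase_subset q T) (Finset.subset_insert p T)))
    · rw [mul_assoc]
      have hcnt : ((T.erase q).filter (· < p)).card = c - 1 := by
        have hqmem : q ∈ T.filter (· < p) := Finset.mem_filter.2 ⟨hqT, hqp⟩
        rw [Finset.filter_erase, Finset.card_erase_of_mem hqmem, hc]
      have hrec := IH (c - 1) (Nat.sub_lt hcpos one_pos) p (T.erase q) hcnt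
      have hstep : ∀ v ∈ SpanU m r d (insert p (T.erase q)),
          gY m r d q * v ∈ SpanU m r d (insert p T) := by
        intro v hv
        induction hv using Submodule.span_induction with
        | mem w hw =>
            obtain ⟨⟨k, U⟩, hU, rfl⟩ := hw
            have hUsub : U ⊆ insert p (T.erase q) := hU
            have hcom : Commute (xprod m r d k) (gY m r d q) := by
              refine Commute.list_prod_left _ _ fun x hx => ?_
              obtain ⟨i, _, rfl⟩ := List.mem_map.mp hx
              exact (X_commute i (gY m r d q)).pow_left _
            rw [qsMonomial_eq, ← mul_assoc, ← hcom.eq, mul_assoc]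
            have hcnt0 : (U.filter (· < q)).card = 0 := by
              rw [Finset.card_eq_zero, Finset.filter_eq_empty_iff]
              intro u hu
              rcases Finset.mem_insert.mp (hUsub hu) with rfl | hu'
              · exact asymm hqp
              · exact not_lt.2 (hmin u (Finset.mem_of_mem_erase hu'))
            have hYq := IH 0 hcpos q U hcnt0
            have hsub : insert q U ⊆ insert p T := by
              intro x hx
              rcases Finset.mem_insert.mp hx with rfl | hx'
              · exact Finset.mem_insert_of_mem hqT
              · rcases Finset.mem_insert.mp (hUsub hx') with rfl | hx''
                · exact Finset.mem_insert_self _ _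
                · exact Finset.mem_insert_of_mem (Finset.mem_of_mem_erase hx'')
            exact xprod_mul_spanU k (spanU_mono hsub hYq)
        | zero => rw [mul_zero]; exact Submodule.zero_mem _
        | add a b _ _ ha hb => rw [mul_add]; exact Submodule.add_mem _ ha hb
        | smul cc a _ ha => rw [mul_smul_comm]; exact Submodule.smul_mem _ _ ha
      exact hstep _ hrec

lemma Y_mul_spanU (p : Fin r) {u : QSAlgebra m r d}
    (hu : u ∈ SpanU m r d Finset.univ) : gY m r d p * u ∈ SpanU m r d Finset.univ := by
  induction hu using Submodule.span_induction with
  | mem w hw =>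
      obtain ⟨⟨k, U⟩, hU, rfl⟩ := hw
      have hcom : Commute (xprod m r d k) (gY m r d p) := by
        refine Commute.list_prod_left _ _ fun x hx => ?_
        obtain ⟨i, _, rfl⟩ := List.mem_map.mp hx
        exact (X_commute i (gY m r d p)).pow_left _
      rw [qsMonomial_eq, ← mul_assoc, ← hcom.eq, mul_assoc]
      exact xprod_mul_spanU k (spanU_mono (Finset.subset_univ _)
        (Y_mul_ysort _ p U rfl))
  | zero => rw [mul_zero]; exact Submodule.zero_mem _
  | add a b _ _ ha hb => rw [mul_add]; exact Submodule.add_mem _ ha hb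
  | smul cc a _ ha => rw [mul_smul_comm]; exact Submodule.smul_mem _ _ ha

theorem qs_span :
    Submodule.span ℂ (Set.range (qsMonomial m r d)) = ⊤ := by
  rw [eq_top_iff]
  rintro u -
  have hS : SpanU m r d Finset.univ ≤ Submodule.span ℂ (Set.range (qsMonomial m r d)) :=
    Submodule.span_mono (Set.image_subset_range _ _)
  refine hS ?_
  obtain ⟨z, rfl⟩ := RingQuot.mkAlgHom_surjective ℂ (QSRel m r d) u
  have h1 : (1 : QSAlgebra m r d) ∈ SpanU m r d Finset.univ := by
    have he : qsMonomial m r d ((fun _ => 0), (∅ : Finset (Fin r))) = 1 := by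
      rw [qsMonomial_eq, xprod_zero, one_mul, ysort, Finset.sort_empty, List.map_nil,
        List.prod_nil]
    exact he ▸ monomial_mem_spanU (by simp)
  have key : ∀ v ∈ SpanU m r d Finset.univ,
      (RingQuot.mkAlgHom ℂ (QSRel m r d)) z * v ∈ SpanU m r d Finset.univ := by
    induction z using FreeAlgebra.induction with
    | grade0 c =>
        intro v hv
        rw [AlgHom.commutes, ← Algebra.smul_def]
        exact Submodule.smul_mem _ _ hv
    | grade1 g =>
        intro v hv
        cases g with
        | inl i => exact X_mul_spanU i hv
        | inr p => exact Y_mul_spanU p hv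
    | mul a b ha hb =>
        intro v hv
        rw [map_mul, mul_assoc]
        exact ha _ (hb _ hv)
    | add a b ha hb =>
        intro v hv
        rw [map_add, add_mul]
        exact Submodule.add_mem _ (ha _ hv) (hb _ hv)
  simpa using key 1 h1

end QSPbw

/-- PBW property for homogeneous quadratic superalgebras: the ordered monomials
form a `ℂ`-vector-space basis of the quotient algebra. -/
theorem qsAlgebra_pbw (m r : ℕ) (d : Fin r → Fin r → Fin m → Fin m → ℂ)
    (hd : ∀ p q k l, d p q k l = d q p k l) :
    LinearIndependent ℂ (qsMonomial m r d) ∧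
      Submodule.span ℂ (Set.range (qsMonomial m r d)) = ⊤ :=
  ⟨QSPbw.qs_linearIndependent hd, QSPbw.qs_span⟩
end

section
/- In the Clifford algebra Cl over ℂ of the quadratic form Q(u⊕v) = Σ_{i=1}^4 u_i v_i on ℂ⁴⊕ℂ⁴, with a_i = ι(e_i⊕0), a^i = ι(0⊕e_i), E^i_j := a^i a_j, S̄^i := (1/6) Σ_{k,l,m} ε^{iklm} a_k a_l a_m and S_j := (1/6) Σ_{k,l,m} ε_{jklm} a^k a^l a^m (ε the four-index Levi-Civita symbol), the following hold for all i,j,k ∈ {1,…,4}: E^i_j S̄^k − S̄^k E^i_j = δ^k_j S̄^i − δ^i_j S̄^k, and E^i_j S_k − S_k E^i_j = −δ^i_k S_j + δ^i_j S_k. -/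
open scoped BigOperators

/-- The bilinear form `B((u,v),(u',v')) = Σᵢ uᵢ v'ᵢ` on `ℂ⁴ ⊕ ℂ⁴`. -/
noncomputable def fermB : (Fin 4 → ℂ) × (Fin 4 → ℂ) →ₗ[ℂ]
    (Fin 4 → ℂ) × (Fin 4 → ℂ) →ₗ[ℂ] ℂ :=
  LinearMap.mk₂ ℂ (fun w w' => ∑ i : Fin 4, w.1 i * w'.2 i)
    (by intro m₁ m₂ n; simp [add_mul, Finset.sum_add_distrib])
    (by intro t m n; simp [Finset.mul_sum, mul_assoc])
    (by intro m n₁ n₂; simp [mul_add, Finset.sum_add_distrib])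
    (by intro t m n; simp [Finset.mul_sum, mul_left_comm])

/-- The quadratic form `Q(u ⊕ v) = Σᵢ uᵢ vᵢ` on `ℂ⁴ ⊕ ℂ⁴`. -/
noncomputable def fermQ : QuadraticForm ℂ ((Fin 4 → ℂ) × (Fin 4 → ℂ)) :=
  LinearMap.BilinMap.toQuadraticMap fermB

/-- The Clifford algebra of `fermQ`. -/
noncomputable abbrev Cl := CliffordAlgebra fermQ

/-- The fermionic annihilation operators `a_i = ι(e_i ⊕ 0)`. -/
noncomputable def aLow (i : Fin 4) : Cl :=
  CliffordAlgebra.ι fermQ (Pi.single i 1, 0)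

/-- The fermionic creation operators `a^i = ι(0 ⊕ e_i)`. -/
noncomputable def aUp (i : Fin 4) : Cl :=
  CliffordAlgebra.ι fermQ (0, Pi.single i 1)

/-- The even generators `E^i_j = a^i a_j` of the fermionic oscillator realization. -/
noncomputable def fermE (i j : Fin 4) : Cl := aUp i * aLow j

/-- The four-index Levi-Civita symbol: `ε(i,j,k,l)` is the sign of the permutation
`(0,1,2,3) ↦ (i,j,k,l)` when the indices are pairwise distinct, and `0` otherwise. -/
noncomputable def lc (i j k l : Fin 4) : ℂ :=
  ∑ σ : Equiv.Perm (Fin 4),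
    if σ 0 = i ∧ σ 1 = j ∧ σ 2 = k ∧ σ 3 = l then ((Equiv.Perm.sign σ : ℤ) : ℂ) else 0

/-- The odd generators `S̄^i = (1/6) Σ ε^{iklm} a_k a_l a_m`. -/
noncomputable def fermSbar (i : Fin 4) : Cl :=
  (1 / 6 : ℂ) • ∑ k : Fin 4, ∑ l : Fin 4, ∑ m : Fin 4,
    lc i k l m • (aLow k * aLow l * aLow m)

/-- The odd generators `S_j = (1/6) Σ ε_{jklm} a^k a^l a^m`. -/
noncomputable def fermS (j : Fin 4) : Cl :=
  (1 / 6 : ℂ) • ∑ k : Fin 4, ∑ l : Fin 4, ∑ m : Fin 4,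
    lc j k l m • (aUp k * aUp l * aUp m)


-- ### Auxiliary lemmas

lemma polar_fermQ (x y) : QuadraticMap.polar fermQ x y = fermB x y + fermB y x :=
  LinearMap.BilinMap.polar_toQuadraticMap x y

lemma aLow_sq (p : Fin 4) : aLow p * aLow p = 0 := by
  rw [aLow, CliffordAlgebra.ι_sq_scalar]
  simp [fermQ, LinearMap.BilinMap.toQuadraticMap_apply, fermB]
  exact map_zero (algebraMap ℂ _)

lemma aUp_sq (p : Fin 4) : aUp p * aUp p = 0 := by
  rw [aUp, CliffordAlgebra.ι_sq_scalar]
  simp [fermQ, LinearMap.BilinMap.toQuadraticMap_apply, fermB]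
  exact map_zero (algebraMap ℂ _)

lemma aLow_swap (p q : Fin 4) : aLow p * aLow q = -(aLow q * aLow p) := by
  have h := CliffordAlgebra.ι_mul_ι_add_swap (Q := fermQ) (Pi.single p 1, 0) (Pi.single q 1, 0)
  rw [polar_fermQ] at h
  simp only [fermB, LinearMap.mk₂_apply] at h
  simp at h
  rw [aLow, aLow]; exact eq_neg_of_add_eq_zero_left h

lemma aUp_swap (p q : Fin 4) : aUp p * aUp q = -(aUp q * aUp p) := by
  have h := CliffordAlgebra.ι_mul_ι_add_swap (Q := fermQ) (0, Pi.single p 1) (0, Pi.single q 1)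
  rw [polar_fermQ] at h
  simp only [fermB, LinearMap.mk₂_apply] at h
  simp at h
  rw [aUp, aUp]; exact eq_neg_of_add_eq_zero_left h

lemma low_up (p q : Fin 4) : aLow p * aUp q = (if p = q then 1 else 0) - aUp q * aLow p := by
  have h := CliffordAlgebra.ι_mul_ι_add_swap (Q := fermQ) (Pi.single p 1, 0) (0, Pi.single q 1)
  rw [polar_fermQ] at h
  simp only [fermB, LinearMap.mk₂_apply] at h
  simp [Pi.single_apply, Finset.sum_ite_eq'] at h
  rw [aLow, aUp, eq_sub_iff_add_eq, h]
  simp [eq_comm]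

-- sorting rules (normal form: aUp's first, then aLow's, each ascending)
lemma low_sort (p q : Fin 4) (h : q < p) : aLow p * aLow q = -(aLow q * aLow p) := aLow_swap p q

lemma low_sort3 (p q : Fin 4) (h : q < p) (x : Cl) :
    aLow p * (aLow q * x) = -(aLow q * (aLow p * x)) := by
  rw [← mul_assoc, aLow_swap, neg_mul, mul_assoc]

lemma low_sq3 (p : Fin 4) (x : Cl) : aLow p * (aLow p * x) = 0 := by
  rw [← mul_assoc, aLow_sq, zero_mul]

lemma up_sort (p q : Fin 4) (h : q < p) : aUp p * aUp q = -(aUp q * aUp p) := aUp_swap p q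

lemma up_sort3 (p q : Fin 4) (h : q < p) (x : Cl) :
    aUp p * (aUp q * x) = -(aUp q * (aUp p * x)) := by
  rw [← mul_assoc, aUp_swap, neg_mul, mul_assoc]

lemma up_sq3 (p : Fin 4) (x : Cl) : aUp p * (aUp p * x) = 0 := by
  rw [← mul_assoc, aUp_sq, zero_mul]

lemma low_up_ne (p q : Fin 4) (h : p ≠ q) : aLow p * aUp q = -(aUp q * aLow p) := by
  rw [low_up, if_neg h, zero_sub]

lemma low_up_ne3 (p q : Fin 4) (h : p ≠ q) (x : Cl) :
    aLow p * (aUp q * x) = -(aUp q * (aLow p * x)) := by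
  rw [← mul_assoc, low_up_ne p q h, neg_mul, mul_assoc]

lemma low_up_eq (p : Fin 4) : aLow p * aUp p = 1 - aUp p * aLow p := by
  rw [low_up, if_pos rfl]

lemma low_up_eq3 (p : Fin 4) (x : Cl) :
    aLow p * (aUp p * x) = x - aUp p * (aLow p * x) := by
  rw [← mul_assoc, low_up_eq, sub_mul, one_mul, mul_assoc]

def lcZ (i j k l : Fin 4) : ℤ :=
  ∑ σ : Equiv.Perm (Fin 4),
    if σ 0 = i ∧ σ 1 = j ∧ σ 2 = k ∧ σ 3 = l then ((Equiv.Perm.sign σ : ℤ)) else 0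

lemma lc_eq_lcZ (i j k l : Fin 4) : lc i j k l = ((lcZ i j k l : ℤ) : ℂ) := by
  rw [lc, lcZ]
  push_cast [apply_ite (fun z : ℤ => (z : ℂ))]
  rfl

lemma lcv_0000 : lc 0 0 0 0 = (0 : ℂ) := by
  rw [lc_eq_lcZ, show lcZ 0 0 0 0 = 0 from by decide]; norm_num

lemma lcv_0001 : lc 0 0 0 1 = (0 : ℂ) := by
  rw [lc_eq_lcZ, show lcZ 0 0 0 1 = 0 from by decide]; norm_num

lemma lcv_0002 : lc 0 0 0 2 = (0 : ℂ) := by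
  rw [lc_eq_lcZ, show lcZ 0 0 0 2 = 0 from by decide]; norm_num

lemma lcv_0003 : lc 0 0 0 3 = (0 : ℂ) := by
  rw [lc_eq_lcZ, show lcZ 0 0 0 3 = 0 from by decide]; norm_num

lemma lcv_0010 : lc 0 0 1 0 = (0 : ℂ) := by
  rw [lc_eq_lcZ, show lcZ 0 0 1 0 = 0 from by decide]; norm_num

lemma lcv_0011 : lc 0 0 1 1 = (0 : ℂ) := by
  rw [lc_eq_lcZ, show lcZ 0 0 1 1 = 0 from by decide]; norm_num

lemma lcv_0012 : lc 0 0 1 2 = (0 : ℂ) := by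
  rw [lc_eq_lcZ, show lcZ 0 0 1 2 = 0 from by decide]; norm_num

lemma lcv_0013 : lc 0 0 1 3 = (0 : ℂ) := by
  rw [lc_eq_lcZ, show lcZ 0 0 1 3 = 0 from by decide]; norm_num

lemma lcv_0020 : lc 0 0 2 0 = (0 : ℂ) := by
  rw [lc_eq_lcZ, show lcZ 0 0 2 0 = 0 from by decide]; norm_num

lemma lcv_0021 : lc 0 0 2 1 = (0 : ℂ) := by
  rw [lc_eq_lcZ, show lcZ 0 0 2 1 = 0 from by decide]; norm_num

lemma lcv_0022 : lc 0 0 2 2 = (0 : ℂ) := by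
  rw [lc_eq_lcZ, show lcZ 0 0 2 2 = 0 from by decide]; norm_num

lemma lcv_0023 : lc 0 0 2 3 = (0 : ℂ) := by
  rw [lc_eq_lcZ, show lcZ 0 0 2 3 = 0 from by decide]; norm_num

lemma lcv_0030 : lc 0 0 3 0 = (0 : ℂ) := by
  rw [lc_eq_lcZ, show lcZ 0 0 3 0 = 0 from by decide]; norm_num

lemma lcv_0031 : lc 0 0 3 1 = (0 : ℂ) := by
  rw [lc_eq_lcZ, show lcZ 0 0 3 1 = 0 from by decide]; norm_num

lemma lcv_0032 : lc 0 0 3 2 = (0 : ℂ) := by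
  rw [lc_eq_lcZ, show lcZ 0 0 3 2 = 0 from by decide]; norm_num

lemma lcv_0033 : lc 0 0 3 3 = (0 : ℂ) := by
  rw [lc_eq_lcZ, show lcZ 0 0 3 3 = 0 from by decide]; norm_num

lemma lcv_0100 : lc 0 1 0 0 = (0 : ℂ) := by
  rw [lc_eq_lcZ, show lcZ 0 1 0 0 = 0 from by decide]; norm_num

lemma lcv_0101 : lc 0 1 0 1 = (0 : ℂ) := by
  rw [lc_eq_lcZ, show lcZ 0 1 0 1 = 0 from by decide]; norm_num

lemma lcv_0102 : lc 0 1 0 2 = (0 : ℂ) := by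
  rw [lc_eq_lcZ, show lcZ 0 1 0 2 = 0 from by decide]; norm_num

lemma lcv_0103 : lc 0 1 0 3 = (0 : ℂ) := by
  rw [lc_eq_lcZ, show lcZ 0 1 0 3 = 0 from by decide]; norm_num

lemma lcv_0110 : lc 0 1 1 0 = (0 : ℂ) := by
  rw [lc_eq_lcZ, show lcZ 0 1 1 0 = 0 from by decide]; norm_num

lemma lcv_0111 : lc 0 1 1 1 = (0 : ℂ) := by
  rw [lc_eq_lcZ, show lcZ 0 1 1 1 = 0 from by decide]; norm_num

lemma lcv_0112 : lc 0 1 1 2 = (0 : ℂ) := by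
  rw [lc_eq_lcZ, show lcZ 0 1 1 2 = 0 from by decide]; norm_num

lemma lcv_0113 : lc 0 1 1 3 = (0 : ℂ) := by
  rw [lc_eq_lcZ, show lcZ 0 1 1 3 = 0 from by decide]; norm_num

lemma lcv_0120 : lc 0 1 2 0 = (0 : ℂ) := by
  rw [lc_eq_lcZ, show lcZ 0 1 2 0 = 0 from by decide]; norm_num

lemma lcv_0121 : lc 0 1 2 1 = (0 : ℂ) := by
  rw [lc_eq_lcZ, show lcZ 0 1 2 1 = 0 from by decide]; norm_num

lemma lcv_0122 : lc 0 1 2 2 = (0 : ℂ) := by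
  rw [lc_eq_lcZ, show lcZ 0 1 2 2 = 0 from by decide]; norm_num

lemma lcv_0123 : lc 0 1 2 3 = (1 : ℂ) := by
  rw [lc_eq_lcZ, show lcZ 0 1 2 3 = 1 from by decide]; norm_num

lemma lcv_0130 : lc 0 1 3 0 = (0 : ℂ) := by
  rw [lc_eq_lcZ, show lcZ 0 1 3 0 = 0 from by decide]; norm_num

lemma lcv_0131 : lc 0 1 3 1 = (0 : ℂ) := by
  rw [lc_eq_lcZ, show lcZ 0 1 3 1 = 0 from by decide]; norm_num

lemma lcv_0132 : lc 0 1 3 2 = (-1 : ℂ) := by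
  rw [lc_eq_lcZ, show lcZ 0 1 3 2 = -1 from by decide]; norm_num

lemma lcv_0133 : lc 0 1 3 3 = (0 : ℂ) := by
  rw [lc_eq_lcZ, show lcZ 0 1 3 3 = 0 from by decide]; norm_num

lemma lcv_0200 : lc 0 2 0 0 = (0 : ℂ) := by
  rw [lc_eq_lcZ, show lcZ 0 2 0 0 = 0 from by decide]; norm_num

lemma lcv_0201 : lc 0 2 0 1 = (0 : ℂ) := by
  rw [lc_eq_lcZ, show lcZ 0 2 0 1 = 0 from by decide]; norm_num

lemma lcv_0202 : lc 0 2 0 2 = (0 : ℂ) := by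
  rw [lc_eq_lcZ, show lcZ 0 2 0 2 = 0 from by decide]; norm_num

lemma lcv_0203 : lc 0 2 0 3 = (0 : ℂ) := by
  rw [lc_eq_lcZ, show lcZ 0 2 0 3 = 0 from by decide]; norm_num

lemma lcv_0210 : lc 0 2 1 0 = (0 : ℂ) := by
  rw [lc_eq_lcZ, show lcZ 0 2 1 0 = 0 from by decide]; norm_num

lemma lcv_0211 : lc 0 2 1 1 = (0 : ℂ) := by
  rw [lc_eq_lcZ, show lcZ 0 2 1 1 = 0 from by decide]; norm_num

lemma lcv_0212 : lc 0 2 1 2 = (0 : ℂ) := by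
  rw [lc_eq_lcZ, show lcZ 0 2 1 2 = 0 from by decide]; norm_num

lemma lcv_0213 : lc 0 2 1 3 = (-1 : ℂ) := by
  rw [lc_eq_lcZ, show lcZ 0 2 1 3 = -1 from by decide]; norm_num

lemma lcv_0220 : lc 0 2 2 0 = (0 : ℂ) := by
  rw [lc_eq_lcZ, show lcZ 0 2 2 0 = 0 from by decide]; norm_num

lemma lcv_0221 : lc 0 2 2 1 = (0 : ℂ) := by
  rw [lc_eq_lcZ, show lcZ 0 2 2 1 = 0 from by decide]; norm_num

lemma lcv_0222 : lc 0 2 2 2 = (0 : ℂ) := by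
  rw [lc_eq_lcZ, show lcZ 0 2 2 2 = 0 from by decide]; norm_num

lemma lcv_0223 : lc 0 2 2 3 = (0 : ℂ) := by
  rw [lc_eq_lcZ, show lcZ 0 2 2 3 = 0 from by decide]; norm_num

lemma lcv_0230 : lc 0 2 3 0 = (0 : ℂ) := by
  rw [lc_eq_lcZ, show lcZ 0 2 3 0 = 0 from by decide]; norm_num

lemma lcv_0231 : lc 0 2 3 1 = (1 : ℂ) := by
  rw [lc_eq_lcZ, show lcZ 0 2 3 1 = 1 from by decide]; norm_num

lemma lcv_0232 : lc 0 2 3 2 = (0 : ℂ) := by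
  rw [lc_eq_lcZ, show lcZ 0 2 3 2 = 0 from by decide]; norm_num

lemma lcv_0233 : lc 0 2 3 3 = (0 : ℂ) := by
  rw [lc_eq_lcZ, show lcZ 0 2 3 3 = 0 from by decide]; norm_num

lemma lcv_0300 : lc 0 3 0 0 = (0 : ℂ) := by
  rw [lc_eq_lcZ, show lcZ 0 3 0 0 = 0 from by decide]; norm_num

lemma lcv_0301 : lc 0 3 0 1 = (0 : ℂ) := by
  rw [lc_eq_lcZ, show lcZ 0 3 0 1 = 0 from by decide]; norm_num

lemma lcv_0302 : lc 0 3 0 2 = (0 : ℂ) := by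
  rw [lc_eq_lcZ, show lcZ 0 3 0 2 = 0 from by decide]; norm_num

lemma lcv_0303 : lc 0 3 0 3 = (0 : ℂ) := by
  rw [lc_eq_lcZ, show lcZ 0 3 0 3 = 0 from by decide]; norm_num

lemma lcv_0310 : lc 0 3 1 0 = (0 : ℂ) := by
  rw [lc_eq_lcZ, show lcZ 0 3 1 0 = 0 from by decide]; norm_num

lemma lcv_0311 : lc 0 3 1 1 = (0 : ℂ) := by
  rw [lc_eq_lcZ, show lcZ 0 3 1 1 = 0 from by decide]; norm_num

lemma lcv_0312 : lc 0 3 1 2 = (1 : ℂ) := by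
  rw [lc_eq_lcZ, show lcZ 0 3 1 2 = 1 from by decide]; norm_num

lemma lcv_0313 : lc 0 3 1 3 = (0 : ℂ) := by
  rw [lc_eq_lcZ, show lcZ 0 3 1 3 = 0 from by decide]; norm_num

lemma lcv_0320 : lc 0 3 2 0 = (0 : ℂ) := by
  rw [lc_eq_lcZ, show lcZ 0 3 2 0 = 0 from by decide]; norm_num

lemma lcv_0321 : lc 0 3 2 1 = (-1 : ℂ) := by
  rw [lc_eq_lcZ, show lcZ 0 3 2 1 = -1 from by decide]; norm_num

lemma lcv_0322 : lc 0 3 2 2 = (0 : ℂ) := by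
  rw [lc_eq_lcZ, show lcZ 0 3 2 2 = 0 from by decide]; norm_num

lemma lcv_0323 : lc 0 3 2 3 = (0 : ℂ) := by
  rw [lc_eq_lcZ, show lcZ 0 3 2 3 = 0 from by decide]; norm_num

lemma lcv_0330 : lc 0 3 3 0 = (0 : ℂ) := by
  rw [lc_eq_lcZ, show lcZ 0 3 3 0 = 0 from by decide]; norm_num

lemma lcv_0331 : lc 0 3 3 1 = (0 : ℂ) := by
  rw [lc_eq_lcZ, show lcZ 0 3 3 1 = 0 from by decide]; norm_num

lemma lcv_0332 : lc 0 3 3 2 = (0 : ℂ) := by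
  rw [lc_eq_lcZ, show lcZ 0 3 3 2 = 0 from by decide]; norm_num

lemma lcv_0333 : lc 0 3 3 3 = (0 : ℂ) := by
  rw [lc_eq_lcZ, show lcZ 0 3 3 3 = 0 from by decide]; norm_num

lemma lcv_1000 : lc 1 0 0 0 = (0 : ℂ) := by
  rw [lc_eq_lcZ, show lcZ 1 0 0 0 = 0 from by decide]; norm_num

lemma lcv_1001 : lc 1 0 0 1 = (0 : ℂ) := by
  rw [lc_eq_lcZ, show lcZ 1 0 0 1 = 0 from by decide]; norm_num

lemma lcv_1002 : lc 1 0 0 2 = (0 : ℂ) := by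
  rw [lc_eq_lcZ, show lcZ 1 0 0 2 = 0 from by decide]; norm_num

lemma lcv_1003 : lc 1 0 0 3 = (0 : ℂ) := by
  rw [lc_eq_lcZ, show lcZ 1 0 0 3 = 0 from by decide]; norm_num

lemma lcv_1010 : lc 1 0 1 0 = (0 : ℂ) := by
  rw [lc_eq_lcZ, show lcZ 1 0 1 0 = 0 from by decide]; norm_num

lemma lcv_1011 : lc 1 0 1 1 = (0 : ℂ) := by
  rw [lc_eq_lcZ, show lcZ 1 0 1 1 = 0 from by decide]; norm_num

lemma lcv_1012 : lc 1 0 1 2 = (0 : ℂ) := by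
  rw [lc_eq_lcZ, show lcZ 1 0 1 2 = 0 from by decide]; norm_num

lemma lcv_1013 : lc 1 0 1 3 = (0 : ℂ) := by
  rw [lc_eq_lcZ, show lcZ 1 0 1 3 = 0 from by decide]; norm_num

lemma lcv_1020 : lc 1 0 2 0 = (0 : ℂ) := by
  rw [lc_eq_lcZ, show lcZ 1 0 2 0 = 0 from by decide]; norm_num

lemma lcv_1021 : lc 1 0 2 1 = (0 : ℂ) := by
  rw [lc_eq_lcZ, show lcZ 1 0 2 1 = 0 from by decide]; norm_num

lemma lcv_1022 : lc 1 0 2 2 = (0 : ℂ) := by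
  rw [lc_eq_lcZ, show lcZ 1 0 2 2 = 0 from by decide]; norm_num

lemma lcv_1023 : lc 1 0 2 3 = (-1 : ℂ) := by
  rw [lc_eq_lcZ, show lcZ 1 0 2 3 = -1 from by decide]; norm_num

lemma lcv_1030 : lc 1 0 3 0 = (0 : ℂ) := by
  rw [lc_eq_lcZ, show lcZ 1 0 3 0 = 0 from by decide]; norm_num

lemma lcv_1031 : lc 1 0 3 1 = (0 : ℂ) := by
  rw [lc_eq_lcZ, show lcZ 1 0 3 1 = 0 from by decide]; norm_num

lemma lcv_1032 : lc 1 0 3 2 = (1 : ℂ) := by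
  rw [lc_eq_lcZ, show lcZ 1 0 3 2 = 1 from by decide]; norm_num

lemma lcv_1033 : lc 1 0 3 3 = (0 : ℂ) := by
  rw [lc_eq_lcZ, show lcZ 1 0 3 3 = 0 from by decide]; norm_num

lemma lcv_1100 : lc 1 1 0 0 = (0 : ℂ) := by
  rw [lc_eq_lcZ, show lcZ 1 1 0 0 = 0 from by decide]; norm_num

lemma lcv_1101 : lc 1 1 0 1 = (0 : ℂ) := by
  rw [lc_eq_lcZ, show lcZ 1 1 0 1 = 0 from by decide]; norm_num

lemma lcv_1102 : lc 1 1 0 2 = (0 : ℂ) := by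
  rw [lc_eq_lcZ, show lcZ 1 1 0 2 = 0 from by decide]; norm_num

lemma lcv_1103 : lc 1 1 0 3 = (0 : ℂ) := by
  rw [lc_eq_lcZ, show lcZ 1 1 0 3 = 0 from by decide]; norm_num

lemma lcv_1110 : lc 1 1 1 0 = (0 : ℂ) := by
  rw [lc_eq_lcZ, show lcZ 1 1 1 0 = 0 from by decide]; norm_num

lemma lcv_1111 : lc 1 1 1 1 = (0 : ℂ) := by
  rw [lc_eq_lcZ, show lcZ 1 1 1 1 = 0 from by decide]; norm_num

lemma lcv_1112 : lc 1 1 1 2 = (0 : ℂ) := by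
  rw [lc_eq_lcZ, show lcZ 1 1 1 2 = 0 from by decide]; norm_num

lemma lcv_1113 : lc 1 1 1 3 = (0 : ℂ) := by
  rw [lc_eq_lcZ, show lcZ 1 1 1 3 = 0 from by decide]; norm_num

lemma lcv_1120 : lc 1 1 2 0 = (0 : ℂ) := by
  rw [lc_eq_lcZ, show lcZ 1 1 2 0 = 0 from by decide]; norm_num

lemma lcv_1121 : lc 1 1 2 1 = (0 : ℂ) := by
  rw [lc_eq_lcZ, show lcZ 1 1 2 1 = 0 from by decide]; norm_num

lemma lcv_1122 : lc 1 1 2 2 = (0 : ℂ) := by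
  rw [lc_eq_lcZ, show lcZ 1 1 2 2 = 0 from by decide]; norm_num

lemma lcv_1123 : lc 1 1 2 3 = (0 : ℂ) := by
  rw [lc_eq_lcZ, show lcZ 1 1 2 3 = 0 from by decide]; norm_num

lemma lcv_1130 : lc 1 1 3 0 = (0 : ℂ) := by
  rw [lc_eq_lcZ, show lcZ 1 1 3 0 = 0 from by decide]; norm_num

lemma lcv_1131 : lc 1 1 3 1 = (0 : ℂ) := by
  rw [lc_eq_lcZ, show lcZ 1 1 3 1 = 0 from by decide]; norm_num

lemma lcv_1132 : lc 1 1 3 2 = (0 : ℂ) := by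
  rw [lc_eq_lcZ, show lcZ 1 1 3 2 = 0 from by decide]; norm_num

lemma lcv_1133 : lc 1 1 3 3 = (0 : ℂ) := by
  rw [lc_eq_lcZ, show lcZ 1 1 3 3 = 0 from by decide]; norm_num

lemma lcv_1200 : lc 1 2 0 0 = (0 : ℂ) := by
  rw [lc_eq_lcZ, show lcZ 1 2 0 0 = 0 from by decide]; norm_num

lemma lcv_1201 : lc 1 2 0 1 = (0 : ℂ) := by
  rw [lc_eq_lcZ, show lcZ 1 2 0 1 = 0 from by decide]; norm_num

lemma lcv_1202 : lc 1 2 0 2 = (0 : ℂ) := by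
  rw [lc_eq_lcZ, show lcZ 1 2 0 2 = 0 from by decide]; norm_num

lemma lcv_1203 : lc 1 2 0 3 = (1 : ℂ) := by
  rw [lc_eq_lcZ, show lcZ 1 2 0 3 = 1 from by decide]; norm_num

lemma lcv_1210 : lc 1 2 1 0 = (0 : ℂ) := by
  rw [lc_eq_lcZ, show lcZ 1 2 1 0 = 0 from by decide]; norm_num

lemma lcv_1211 : lc 1 2 1 1 = (0 : ℂ) := by
  rw [lc_eq_lcZ, show lcZ 1 2 1 1 = 0 from by decide]; norm_num

lemma lcv_1212 : lc 1 2 1 2 = (0 : ℂ) := by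
  rw [lc_eq_lcZ, show lcZ 1 2 1 2 = 0 from by decide]; norm_num

lemma lcv_1213 : lc 1 2 1 3 = (0 : ℂ) := by
  rw [lc_eq_lcZ, show lcZ 1 2 1 3 = 0 from by decide]; norm_num

lemma lcv_1220 : lc 1 2 2 0 = (0 : ℂ) := by
  rw [lc_eq_lcZ, show lcZ 1 2 2 0 = 0 from by decide]; norm_num

lemma lcv_1221 : lc 1 2 2 1 = (0 : ℂ) := by
  rw [lc_eq_lcZ, show lcZ 1 2 2 1 = 0 from by decide]; norm_num

lemma lcv_1222 : lc 1 2 2 2 = (0 : ℂ) := by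
  rw [lc_eq_lcZ, show lcZ 1 2 2 2 = 0 from by decide]; norm_num

lemma lcv_1223 : lc 1 2 2 3 = (0 : ℂ) := by
  rw [lc_eq_lcZ, show lcZ 1 2 2 3 = 0 from by decide]; norm_num

lemma lcv_1230 : lc 1 2 3 0 = (-1 : ℂ) := by
  rw [lc_eq_lcZ, show lcZ 1 2 3 0 = -1 from by decide]; norm_num

lemma lcv_1231 : lc 1 2 3 1 = (0 : ℂ) := by
  rw [lc_eq_lcZ, show lcZ 1 2 3 1 = 0 from by decide]; norm_num

lemma lcv_1232 : lc 1 2 3 2 = (0 : ℂ) := by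
  rw [lc_eq_lcZ, show lcZ 1 2 3 2 = 0 from by decide]; norm_num

lemma lcv_1233 : lc 1 2 3 3 = (0 : ℂ) := by
  rw [lc_eq_lcZ, show lcZ 1 2 3 3 = 0 from by decide]; norm_num

lemma lcv_1300 : lc 1 3 0 0 = (0 : ℂ) := by
  rw [lc_eq_lcZ, show lcZ 1 3 0 0 = 0 from by decide]; norm_num

lemma lcv_1301 : lc 1 3 0 1 = (0 : ℂ) := by
  rw [lc_eq_lcZ, show lcZ 1 3 0 1 = 0 from by decide]; norm_num

lemma lcv_1302 : lc 1 3 0 2 = (-1 : ℂ) := by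
  rw [lc_eq_lcZ, show lcZ 1 3 0 2 = -1 from by decide]; norm_num

lemma lcv_1303 : lc 1 3 0 3 = (0 : ℂ) := by
  rw [lc_eq_lcZ, show lcZ 1 3 0 3 = 0 from by decide]; norm_num

lemma lcv_1310 : lc 1 3 1 0 = (0 : ℂ) := by
  rw [lc_eq_lcZ, show lcZ 1 3 1 0 = 0 from by decide]; norm_num

lemma lcv_1311 : lc 1 3 1 1 = (0 : ℂ) := by
  rw [lc_eq_lcZ, show lcZ 1 3 1 1 = 0 from by decide]; norm_num

lemma lcv_1312 : lc 1 3 1 2 = (0 : ℂ) := by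
  rw [lc_eq_lcZ, show lcZ 1 3 1 2 = 0 from by decide]; norm_num

lemma lcv_1313 : lc 1 3 1 3 = (0 : ℂ) := by
  rw [lc_eq_lcZ, show lcZ 1 3 1 3 = 0 from by decide]; norm_num

lemma lcv_1320 : lc 1 3 2 0 = (1 : ℂ) := by
  rw [lc_eq_lcZ, show lcZ 1 3 2 0 = 1 from by decide]; norm_num

lemma lcv_1321 : lc 1 3 2 1 = (0 : ℂ) := by
  rw [lc_eq_lcZ, show lcZ 1 3 2 1 = 0 from by decide]; norm_num

lemma lcv_1322 : lc 1 3 2 2 = (0 : ℂ) := by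
  rw [lc_eq_lcZ, show lcZ 1 3 2 2 = 0 from by decide]; norm_num

lemma lcv_1323 : lc 1 3 2 3 = (0 : ℂ) := by
  rw [lc_eq_lcZ, show lcZ 1 3 2 3 = 0 from by decide]; norm_num

lemma lcv_1330 : lc 1 3 3 0 = (0 : ℂ) := by
  rw [lc_eq_lcZ, show lcZ 1 3 3 0 = 0 from by decide]; norm_num

lemma lcv_1331 : lc 1 3 3 1 = (0 : ℂ) := by
  rw [lc_eq_lcZ, show lcZ 1 3 3 1 = 0 from by decide]; norm_num

lemma lcv_1332 : lc 1 3 3 2 = (0 : ℂ) := by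
  rw [lc_eq_lcZ, show lcZ 1 3 3 2 = 0 from by decide]; norm_num

lemma lcv_1333 : lc 1 3 3 3 = (0 : ℂ) := by
  rw [lc_eq_lcZ, show lcZ 1 3 3 3 = 0 from by decide]; norm_num

lemma lcv_2000 : lc 2 0 0 0 = (0 : ℂ) := by
  rw [lc_eq_lcZ, show lcZ 2 0 0 0 = 0 from by decide]; norm_num

lemma lcv_2001 : lc 2 0 0 1 = (0 : ℂ) := by
  rw [lc_eq_lcZ, show lcZ 2 0 0 1 = 0 from by decide]; norm_num

lemma lcv_2002 : lc 2 0 0 2 = (0 : ℂ) := by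
  rw [lc_eq_lcZ, show lcZ 2 0 0 2 = 0 from by decide]; norm_num

lemma lcv_2003 : lc 2 0 0 3 = (0 : ℂ) := by
  rw [lc_eq_lcZ, show lcZ 2 0 0 3 = 0 from by decide]; norm_num

lemma lcv_2010 : lc 2 0 1 0 = (0 : ℂ) := by
  rw [lc_eq_lcZ, show lcZ 2 0 1 0 = 0 from by decide]; norm_num

lemma lcv_2011 : lc 2 0 1 1 = (0 : ℂ) := by
  rw [lc_eq_lcZ, show lcZ 2 0 1 1 = 0 from by decide]; norm_num

lemma lcv_2012 : lc 2 0 1 2 = (0 : ℂ) := by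
  rw [lc_eq_lcZ, show lcZ 2 0 1 2 = 0 from by decide]; norm_num

lemma lcv_2013 : lc 2 0 1 3 = (1 : ℂ) := by
  rw [lc_eq_lcZ, show lcZ 2 0 1 3 = 1 from by decide]; norm_num

lemma lcv_2020 : lc 2 0 2 0 = (0 : ℂ) := by
  rw [lc_eq_lcZ, show lcZ 2 0 2 0 = 0 from by decide]; norm_num

lemma lcv_2021 : lc 2 0 2 1 = (0 : ℂ) := by
  rw [lc_eq_lcZ, show lcZ 2 0 2 1 = 0 from by decide]; norm_num

lemma lcv_2022 : lc 2 0 2 2 = (0 : ℂ) := by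
  rw [lc_eq_lcZ, show lcZ 2 0 2 2 = 0 from by decide]; norm_num

lemma lcv_2023 : lc 2 0 2 3 = (0 : ℂ) := by
  rw [lc_eq_lcZ, show lcZ 2 0 2 3 = 0 from by decide]; norm_num

lemma lcv_2030 : lc 2 0 3 0 = (0 : ℂ) := by
  rw [lc_eq_lcZ, show lcZ 2 0 3 0 = 0 from by decide]; norm_num

lemma lcv_2031 : lc 2 0 3 1 = (-1 : ℂ) := by
  rw [lc_eq_lcZ, show lcZ 2 0 3 1 = -1 from by decide]; norm_num

lemma lcv_2032 : lc 2 0 3 2 = (0 : ℂ) := by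
  rw [lc_eq_lcZ, show lcZ 2 0 3 2 = 0 from by decide]; norm_num

lemma lcv_2033 : lc 2 0 3 3 = (0 : ℂ) := by
  rw [lc_eq_lcZ, show lcZ 2 0 3 3 = 0 from by decide]; norm_num

lemma lcv_2100 : lc 2 1 0 0 = (0 : ℂ) := by
  rw [lc_eq_lcZ, show lcZ 2 1 0 0 = 0 from by decide]; norm_num

lemma lcv_2101 : lc 2 1 0 1 = (0 : ℂ) := by
  rw [lc_eq_lcZ, show lcZ 2 1 0 1 = 0 from by decide]; norm_num

lemma lcv_2102 : lc 2 1 0 2 = (0 : ℂ) := by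
  rw [lc_eq_lcZ, show lcZ 2 1 0 2 = 0 from by decide]; norm_num

lemma lcv_2103 : lc 2 1 0 3 = (-1 : ℂ) := by
  rw [lc_eq_lcZ, show lcZ 2 1 0 3 = -1 from by decide]; norm_num

lemma lcv_2110 : lc 2 1 1 0 = (0 : ℂ) := by
  rw [lc_eq_lcZ, show lcZ 2 1 1 0 = 0 from by decide]; norm_num

lemma lcv_2111 : lc 2 1 1 1 = (0 : ℂ) := by
  rw [lc_eq_lcZ, show lcZ 2 1 1 1 = 0 from by decide]; norm_num

lemma lcv_2112 : lc 2 1 1 2 = (0 : ℂ) := by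
  rw [lc_eq_lcZ, show lcZ 2 1 1 2 = 0 from by decide]; norm_num

lemma lcv_2113 : lc 2 1 1 3 = (0 : ℂ) := by
  rw [lc_eq_lcZ, show lcZ 2 1 1 3 = 0 from by decide]; norm_num

lemma lcv_2120 : lc 2 1 2 0 = (0 : ℂ) := by
  rw [lc_eq_lcZ, show lcZ 2 1 2 0 = 0 from by decide]; norm_num

lemma lcv_2121 : lc 2 1 2 1 = (0 : ℂ) := by
  rw [lc_eq_lcZ, show lcZ 2 1 2 1 = 0 from by decide]; norm_num

lemma lcv_2122 : lc 2 1 2 2 = (0 : ℂ) := by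
  rw [lc_eq_lcZ, show lcZ 2 1 2 2 = 0 from by decide]; norm_num

lemma lcv_2123 : lc 2 1 2 3 = (0 : ℂ) := by
  rw [lc_eq_lcZ, show lcZ 2 1 2 3 = 0 from by decide]; norm_num

lemma lcv_2130 : lc 2 1 3 0 = (1 : ℂ) := by
  rw [lc_eq_lcZ, show lcZ 2 1 3 0 = 1 from by decide]; norm_num

lemma lcv_2131 : lc 2 1 3 1 = (0 : ℂ) := by
  rw [lc_eq_lcZ, show lcZ 2 1 3 1 = 0 from by decide]; norm_num

lemma lcv_2132 : lc 2 1 3 2 = (0 : ℂ) := by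
  rw [lc_eq_lcZ, show lcZ 2 1 3 2 = 0 from by decide]; norm_num

lemma lcv_2133 : lc 2 1 3 3 = (0 : ℂ) := by
  rw [lc_eq_lcZ, show lcZ 2 1 3 3 = 0 from by decide]; norm_num

lemma lcv_2200 : lc 2 2 0 0 = (0 : ℂ) := by
  rw [lc_eq_lcZ, show lcZ 2 2 0 0 = 0 from by decide]; norm_num

lemma lcv_2201 : lc 2 2 0 1 = (0 : ℂ) := by
  rw [lc_eq_lcZ, show lcZ 2 2 0 1 = 0 from by decide]; norm_num

lemma lcv_2202 : lc 2 2 0 2 = (0 : ℂ) := by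
  rw [lc_eq_lcZ, show lcZ 2 2 0 2 = 0 from by decide]; norm_num

lemma lcv_2203 : lc 2 2 0 3 = (0 : ℂ) := by
  rw [lc_eq_lcZ, show lcZ 2 2 0 3 = 0 from by decide]; norm_num

lemma lcv_2210 : lc 2 2 1 0 = (0 : ℂ) := by
  rw [lc_eq_lcZ, show lcZ 2 2 1 0 = 0 from by decide]; norm_num

lemma lcv_2211 : lc 2 2 1 1 = (0 : ℂ) := by
  rw [lc_eq_lcZ, show lcZ 2 2 1 1 = 0 from by decide]; norm_num

lemma lcv_2212 : lc 2 2 1 2 = (0 : ℂ) := by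
  rw [lc_eq_lcZ, show lcZ 2 2 1 2 = 0 from by decide]; norm_num

lemma lcv_2213 : lc 2 2 1 3 = (0 : ℂ) := by
  rw [lc_eq_lcZ, show lcZ 2 2 1 3 = 0 from by decide]; norm_num

lemma lcv_2220 : lc 2 2 2 0 = (0 : ℂ) := by
  rw [lc_eq_lcZ, show lcZ 2 2 2 0 = 0 from by decide]; norm_num

lemma lcv_2221 : lc 2 2 2 1 = (0 : ℂ) := by
  rw [lc_eq_lcZ, show lcZ 2 2 2 1 = 0 from by decide]; norm_num

lemma lcv_2222 : lc 2 2 2 2 = (0 : ℂ) := by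
  rw [lc_eq_lcZ, show lcZ 2 2 2 2 = 0 from by decide]; norm_num

lemma lcv_2223 : lc 2 2 2 3 = (0 : ℂ) := by
  rw [lc_eq_lcZ, show lcZ 2 2 2 3 = 0 from by decide]; norm_num

lemma lcv_2230 : lc 2 2 3 0 = (0 : ℂ) := by
  rw [lc_eq_lcZ, show lcZ 2 2 3 0 = 0 from by decide]; norm_num

lemma lcv_2231 : lc 2 2 3 1 = (0 : ℂ) := by
  rw [lc_eq_lcZ, show lcZ 2 2 3 1 = 0 from by decide]; norm_num

lemma lcv_2232 : lc 2 2 3 2 = (0 : ℂ) := by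
  rw [lc_eq_lcZ, show lcZ 2 2 3 2 = 0 from by decide]; norm_num

lemma lcv_2233 : lc 2 2 3 3 = (0 : ℂ) := by
  rw [lc_eq_lcZ, show lcZ 2 2 3 3 = 0 from by decide]; norm_num

lemma lcv_2300 : lc 2 3 0 0 = (0 : ℂ) := by
  rw [lc_eq_lcZ, show lcZ 2 3 0 0 = 0 from by decide]; norm_num

lemma lcv_2301 : lc 2 3 0 1 = (1 : ℂ) := by
  rw [lc_eq_lcZ, show lcZ 2 3 0 1 = 1 from by decide]; norm_num

lemma lcv_2302 : lc 2 3 0 2 = (0 : ℂ) := by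
  rw [lc_eq_lcZ, show lcZ 2 3 0 2 = 0 from by decide]; norm_num

lemma lcv_2303 : lc 2 3 0 3 = (0 : ℂ) := by
  rw [lc_eq_lcZ, show lcZ 2 3 0 3 = 0 from by decide]; norm_num

lemma lcv_2310 : lc 2 3 1 0 = (-1 : ℂ) := by
  rw [lc_eq_lcZ, show lcZ 2 3 1 0 = -1 from by decide]; norm_num

lemma lcv_2311 : lc 2 3 1 1 = (0 : ℂ) := by
  rw [lc_eq_lcZ, show lcZ 2 3 1 1 = 0 from by decide]; norm_num

lemma lcv_2312 : lc 2 3 1 2 = (0 : ℂ) := by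
  rw [lc_eq_lcZ, show lcZ 2 3 1 2 = 0 from by decide]; norm_num

lemma lcv_2313 : lc 2 3 1 3 = (0 : ℂ) := by
  rw [lc_eq_lcZ, show lcZ 2 3 1 3 = 0 from by decide]; norm_num

lemma lcv_2320 : lc 2 3 2 0 = (0 : ℂ) := by
  rw [lc_eq_lcZ, show lcZ 2 3 2 0 = 0 from by decide]; norm_num

lemma lcv_2321 : lc 2 3 2 1 = (0 : ℂ) := by
  rw [lc_eq_lcZ, show lcZ 2 3 2 1 = 0 from by decide]; norm_num

lemma lcv_2322 : lc 2 3 2 2 = (0 : ℂ) := by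
  rw [lc_eq_lcZ, show lcZ 2 3 2 2 = 0 from by decide]; norm_num

lemma lcv_2323 : lc 2 3 2 3 = (0 : ℂ) := by
  rw [lc_eq_lcZ, show lcZ 2 3 2 3 = 0 from by decide]; norm_num

lemma lcv_2330 : lc 2 3 3 0 = (0 : ℂ) := by
  rw [lc_eq_lcZ, show lcZ 2 3 3 0 = 0 from by decide]; norm_num

lemma lcv_2331 : lc 2 3 3 1 = (0 : ℂ) := by
  rw [lc_eq_lcZ, show lcZ 2 3 3 1 = 0 from by decide]; norm_num

lemma lcv_2332 : lc 2 3 3 2 = (0 : ℂ) := by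
  rw [lc_eq_lcZ, show lcZ 2 3 3 2 = 0 from by decide]; norm_num

lemma lcv_2333 : lc 2 3 3 3 = (0 : ℂ) := by
  rw [lc_eq_lcZ, show lcZ 2 3 3 3 = 0 from by decide]; norm_num

lemma lcv_3000 : lc 3 0 0 0 = (0 : ℂ) := by
  rw [lc_eq_lcZ, show lcZ 3 0 0 0 = 0 from by decide]; norm_num

lemma lcv_3001 : lc 3 0 0 1 = (0 : ℂ) := by
  rw [lc_eq_lcZ, show lcZ 3 0 0 1 = 0 from by decide]; norm_num

lemma lcv_3002 : lc 3 0 0 2 = (0 : ℂ) := by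
  rw [lc_eq_lcZ, show lcZ 3 0 0 2 = 0 from by decide]; norm_num

lemma lcv_3003 : lc 3 0 0 3 = (0 : ℂ) := by
  rw [lc_eq_lcZ, show lcZ 3 0 0 3 = 0 from by decide]; norm_num

lemma lcv_3010 : lc 3 0 1 0 = (0 : ℂ) := by
  rw [lc_eq_lcZ, show lcZ 3 0 1 0 = 0 from by decide]; norm_num

lemma lcv_3011 : lc 3 0 1 1 = (0 : ℂ) := by
  rw [lc_eq_lcZ, show lcZ 3 0 1 1 = 0 from by decide]; norm_num

lemma lcv_3012 : lc 3 0 1 2 = (-1 : ℂ) := by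
  rw [lc_eq_lcZ, show lcZ 3 0 1 2 = -1 from by decide]; norm_num

lemma lcv_3013 : lc 3 0 1 3 = (0 : ℂ) := by
  rw [lc_eq_lcZ, show lcZ 3 0 1 3 = 0 from by decide]; norm_num

lemma lcv_3020 : lc 3 0 2 0 = (0 : ℂ) := by
  rw [lc_eq_lcZ, show lcZ 3 0 2 0 = 0 from by decide]; norm_num

lemma lcv_3021 : lc 3 0 2 1 = (1 : ℂ) := by
  rw [lc_eq_lcZ, show lcZ 3 0 2 1 = 1 from by decide]; norm_num

lemma lcv_3022 : lc 3 0 2 2 = (0 : ℂ) := by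
  rw [lc_eq_lcZ, show lcZ 3 0 2 2 = 0 from by decide]; norm_num

lemma lcv_3023 : lc 3 0 2 3 = (0 : ℂ) := by
  rw [lc_eq_lcZ, show lcZ 3 0 2 3 = 0 from by decide]; norm_num

lemma lcv_3030 : lc 3 0 3 0 = (0 : ℂ) := by
  rw [lc_eq_lcZ, show lcZ 3 0 3 0 = 0 from by decide]; norm_num

lemma lcv_3031 : lc 3 0 3 1 = (0 : ℂ) := by
  rw [lc_eq_lcZ, show lcZ 3 0 3 1 = 0 from by decide]; norm_num

lemma lcv_3032 : lc 3 0 3 2 = (0 : ℂ) := by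
  rw [lc_eq_lcZ, show lcZ 3 0 3 2 = 0 from by decide]; norm_num

lemma lcv_3033 : lc 3 0 3 3 = (0 : ℂ) := by
  rw [lc_eq_lcZ, show lcZ 3 0 3 3 = 0 from by decide]; norm_num

lemma lcv_3100 : lc 3 1 0 0 = (0 : ℂ) := by
  rw [lc_eq_lcZ, show lcZ 3 1 0 0 = 0 from by decide]; norm_num

lemma lcv_3101 : lc 3 1 0 1 = (0 : ℂ) := by
  rw [lc_eq_lcZ, show lcZ 3 1 0 1 = 0 from by decide]; norm_num

lemma lcv_3102 : lc 3 1 0 2 = (1 : ℂ) := by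
  rw [lc_eq_lcZ, show lcZ 3 1 0 2 = 1 from by decide]; norm_num

lemma lcv_3103 : lc 3 1 0 3 = (0 : ℂ) := by
  rw [lc_eq_lcZ, show lcZ 3 1 0 3 = 0 from by decide]; norm_num

lemma lcv_3110 : lc 3 1 1 0 = (0 : ℂ) := by
  rw [lc_eq_lcZ, show lcZ 3 1 1 0 = 0 from by decide]; norm_num

lemma lcv_3111 : lc 3 1 1 1 = (0 : ℂ) := by
  rw [lc_eq_lcZ, show lcZ 3 1 1 1 = 0 from by decide]; norm_num

lemma lcv_3112 : lc 3 1 1 2 = (0 : ℂ) := by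
  rw [lc_eq_lcZ, show lcZ 3 1 1 2 = 0 from by decide]; norm_num

lemma lcv_3113 : lc 3 1 1 3 = (0 : ℂ) := by
  rw [lc_eq_lcZ, show lcZ 3 1 1 3 = 0 from by decide]; norm_num

lemma lcv_3120 : lc 3 1 2 0 = (-1 : ℂ) := by
  rw [lc_eq_lcZ, show lcZ 3 1 2 0 = -1 from by decide]; norm_num

lemma lcv_3121 : lc 3 1 2 1 = (0 : ℂ) := by
  rw [lc_eq_lcZ, show lcZ 3 1 2 1 = 0 from by decide]; norm_num

lemma lcv_3122 : lc 3 1 2 2 = (0 : ℂ) := by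
  rw [lc_eq_lcZ, show lcZ 3 1 2 2 = 0 from by decide]; norm_num

lemma lcv_3123 : lc 3 1 2 3 = (0 : ℂ) := by
  rw [lc_eq_lcZ, show lcZ 3 1 2 3 = 0 from by decide]; norm_num

lemma lcv_3130 : lc 3 1 3 0 = (0 : ℂ) := by
  rw [lc_eq_lcZ, show lcZ 3 1 3 0 = 0 from by decide]; norm_num

lemma lcv_3131 : lc 3 1 3 1 = (0 : ℂ) := by
  rw [lc_eq_lcZ, show lcZ 3 1 3 1 = 0 from by decide]; norm_num

lemma lcv_3132 : lc 3 1 3 2 = (0 : ℂ) := by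
  rw [lc_eq_lcZ, show lcZ 3 1 3 2 = 0 from by decide]; norm_num

lemma lcv_3133 : lc 3 1 3 3 = (0 : ℂ) := by
  rw [lc_eq_lcZ, show lcZ 3 1 3 3 = 0 from by decide]; norm_num

lemma lcv_3200 : lc 3 2 0 0 = (0 : ℂ) := by
  rw [lc_eq_lcZ, show lcZ 3 2 0 0 = 0 from by decide]; norm_num

lemma lcv_3201 : lc 3 2 0 1 = (-1 : ℂ) := by
  rw [lc_eq_lcZ, show lcZ 3 2 0 1 = -1 from by decide]; norm_num

lemma lcv_3202 : lc 3 2 0 2 = (0 : ℂ) := by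
  rw [lc_eq_lcZ, show lcZ 3 2 0 2 = 0 from by decide]; norm_num

lemma lcv_3203 : lc 3 2 0 3 = (0 : ℂ) := by
  rw [lc_eq_lcZ, show lcZ 3 2 0 3 = 0 from by decide]; norm_num

lemma lcv_3210 : lc 3 2 1 0 = (1 : ℂ) := by
  rw [lc_eq_lcZ, show lcZ 3 2 1 0 = 1 from by decide]; norm_num

lemma lcv_3211 : lc 3 2 1 1 = (0 : ℂ) := by
  rw [lc_eq_lcZ, show lcZ 3 2 1 1 = 0 from by decide]; norm_num

lemma lcv_3212 : lc 3 2 1 2 = (0 : ℂ) := by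
  rw [lc_eq_lcZ, show lcZ 3 2 1 2 = 0 from by decide]; norm_num

lemma lcv_3213 : lc 3 2 1 3 = (0 : ℂ) := by
  rw [lc_eq_lcZ, show lcZ 3 2 1 3 = 0 from by decide]; norm_num

lemma lcv_3220 : lc 3 2 2 0 = (0 : ℂ) := by
  rw [lc_eq_lcZ, show lcZ 3 2 2 0 = 0 from by decide]; norm_num

lemma lcv_3221 : lc 3 2 2 1 = (0 : ℂ) := by
  rw [lc_eq_lcZ, show lcZ 3 2 2 1 = 0 from by decide]; norm_num

lemma lcv_3222 : lc 3 2 2 2 = (0 : ℂ) := by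
  rw [lc_eq_lcZ, show lcZ 3 2 2 2 = 0 from by decide]; norm_num

lemma lcv_3223 : lc 3 2 2 3 = (0 : ℂ) := by
  rw [lc_eq_lcZ, show lcZ 3 2 2 3 = 0 from by decide]; norm_num

lemma lcv_3230 : lc 3 2 3 0 = (0 : ℂ) := by
  rw [lc_eq_lcZ, show lcZ 3 2 3 0 = 0 from by decide]; norm_num

lemma lcv_3231 : lc 3 2 3 1 = (0 : ℂ) := by
  rw [lc_eq_lcZ, show lcZ 3 2 3 1 = 0 from by decide]; norm_num

lemma lcv_3232 : lc 3 2 3 2 = (0 : ℂ) := by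
  rw [lc_eq_lcZ, show lcZ 3 2 3 2 = 0 from by decide]; norm_num

lemma lcv_3233 : lc 3 2 3 3 = (0 : ℂ) := by
  rw [lc_eq_lcZ, show lcZ 3 2 3 3 = 0 from by decide]; norm_num

lemma lcv_3300 : lc 3 3 0 0 = (0 : ℂ) := by
  rw [lc_eq_lcZ, show lcZ 3 3 0 0 = 0 from by decide]; norm_num

lemma lcv_3301 : lc 3 3 0 1 = (0 : ℂ) := by
  rw [lc_eq_lcZ, show lcZ 3 3 0 1 = 0 from by decide]; norm_num

lemma lcv_3302 : lc 3 3 0 2 = (0 : ℂ) := by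
  rw [lc_eq_lcZ, show lcZ 3 3 0 2 = 0 from by decide]; norm_num

lemma lcv_3303 : lc 3 3 0 3 = (0 : ℂ) := by
  rw [lc_eq_lcZ, show lcZ 3 3 0 3 = 0 from by decide]; norm_num

lemma lcv_3310 : lc 3 3 1 0 = (0 : ℂ) := by
  rw [lc_eq_lcZ, show lcZ 3 3 1 0 = 0 from by decide]; norm_num

lemma lcv_3311 : lc 3 3 1 1 = (0 : ℂ) := by
  rw [lc_eq_lcZ, show lcZ 3 3 1 1 = 0 from by decide]; norm_num

lemma lcv_3312 : lc 3 3 1 2 = (0 : ℂ) := by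
  rw [lc_eq_lcZ, show lcZ 3 3 1 2 = 0 from by decide]; norm_num

lemma lcv_3313 : lc 3 3 1 3 = (0 : ℂ) := by
  rw [lc_eq_lcZ, show lcZ 3 3 1 3 = 0 from by decide]; norm_num

lemma lcv_3320 : lc 3 3 2 0 = (0 : ℂ) := by
  rw [lc_eq_lcZ, show lcZ 3 3 2 0 = 0 from by decide]; norm_num

lemma lcv_3321 : lc 3 3 2 1 = (0 : ℂ) := by
  rw [lc_eq_lcZ, show lcZ 3 3 2 1 = 0 from by decide]; norm_num

lemma lcv_3322 : lc 3 3 2 2 = (0 : ℂ) := by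
  rw [lc_eq_lcZ, show lcZ 3 3 2 2 = 0 from by decide]; norm_num

lemma lcv_3323 : lc 3 3 2 3 = (0 : ℂ) := by
  rw [lc_eq_lcZ, show lcZ 3 3 2 3 = 0 from by decide]; norm_num

lemma lcv_3330 : lc 3 3 3 0 = (0 : ℂ) := by
  rw [lc_eq_lcZ, show lcZ 3 3 3 0 = 0 from by decide]; norm_num

lemma lcv_3331 : lc 3 3 3 1 = (0 : ℂ) := by
  rw [lc_eq_lcZ, show lcZ 3 3 3 1 = 0 from by decide]; norm_num

lemma lcv_3332 : lc 3 3 3 2 = (0 : ℂ) := by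
  rw [lc_eq_lcZ, show lcZ 3 3 3 2 = 0 from by decide]; norm_num

lemma lcv_3333 : lc 3 3 3 3 = (0 : ℂ) := by
  rw [lc_eq_lcZ, show lcZ 3 3 3 3 = 0 from by decide]; norm_num


lemma fermSbar_eq_0 : fermSbar 0 = aLow 1 * (aLow 2 * aLow 3) := by
  rw [fermSbar]
  simp only [Fin.sum_univ_four, lcv_0000, lcv_0001, lcv_0002, lcv_0003, lcv_0010, lcv_0011, lcv_0012, lcv_0013, lcv_0020, lcv_0021, lcv_0022, lcv_0023, lcv_0030, lcv_0031, lcv_0032, lcv_0033, lcv_0100, lcv_0101, lcv_0102, lcv_0103, lcv_0110, lcv_0111, lcv_0112, lcv_0113, lcv_0120, lcv_0121, lcv_0122, lcv_0123, lcv_0130, lcv_0131, lcv_0132, lcv_0133, lcv_0200, lcv_0201, lcv_0202, lcv_0203, lcv_0210, lcv_0211, lcv_0212, lcv_0213, lcv_0220, lcv_0221, lcv_0222, lcv_0223, lcv_0230, lcv_0231, lcv_0232, lcv_0233, lcv_0300, lcv_0301, lcv_0302, lcv_0303, lcv_0310, lcv_0311, lcv_0312, lcv_0313, lcv_0320, lcv_0321,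 lcv_0322, lcv_0323, lcv_0330, lcv_0331, lcv_0332, lcv_0333,
    zero_smul, add_zero, zero_add, one_smul, neg_smul, mul_assoc]
  simp (config := { decide := true }) only [low_sort3, low_sq3, low_sort, aLow_sq,
    mul_neg, neg_neg, mul_zero, neg_zero, add_zero, zero_add, neg_add_rev]
  module

lemma fermSbar_eq_1 : fermSbar 1 = -(aLow 0 * (aLow 2 * aLow 3)) := by
  rw [fermSbar]
  simp only [Fin.sum_univ_four, lcv_1000, lcv_1001, lcv_1002, lcv_1003, lcv_1010, lcv_1011, lcv_1012, lcv_1013, lcv_1020, lcv_1021, lcv_1022, lcv_1023, lcv_1030, lcv_1031, lcv_1032, lcv_1033, lcv_1100, lcv_1101, lcv_1102, lcv_1103, lcv_1110, lcv_1111, lcv_1112, lcv_1113, lcv_1120, lcv_1121, lcv_1122, lcv_1123, lcv_1130, lcv_1131, lcv_1132, lcv_1133, lcv_1200, lcv_1201, lcv_1202, lcv_1203, lcv_1210, lcv_1211, lcv_1212, lcv_1213, lcv_1220, lcv_1221, lcv_1222, lcv_1223, lcv_1230, lcv_1231, lcv_1232, lcv_1233, lcv_1300, lcv_1301, lcv_1302,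 lcv_1303, lcv_1310, lcv_1311, lcv_1312, lcv_1313, lcv_1320, lcv_1321, lcv_1322, lcv_1323, lcv_1330, lcv_1331, lcv_1332, lcv_1333,
    zero_smul, add_zero, zero_add, one_smul, neg_smul, mul_assoc]
  simp (config := { decide := true }) only [low_sort3, low_sq3, low_sort, aLow_sq,
    mul_neg, neg_neg, mul_zero, neg_zero, add_zero, zero_add, neg_add_rev]
  module

lemma fermSbar_eq_2 : fermSbar 2 = aLow 0 * (aLow 1 * aLow 3) := by
  rw [fermSbar]
  simp only [Fin.sum_univ_four, lcv_2000, lcv_2001, lcv_2002, lcv_2003, lcv_2010, lcv_2011, lcv_2012, lcv_2013, lcv_2020, lcv_2021, lcv_2022, lcv_2023, lcv_2030, lcv_2031, lcv_2032, lcv_2033, lcv_2100, lcv_2101, lcv_2102, lcv_2103, lcv_2110, lcv_2111, lcv_2112, lcv_2113, lcv_2120, lcv_2121, lcv_2122, lcv_2123, lcv_2130, lcv_2131, lcv_2132, lcv_2133, lcv_2200, lcv_2201, lcv_2202, lcv_2203, lcv_2210, lcv_2211, lcv_2212, lcv_2213, lcv_2220, lcv_2221, lcv_2222, lcv_2223,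 lcv_2230, lcv_2231, lcv_2232, lcv_2233, lcv_2300, lcv_2301, lcv_2302, lcv_2303, lcv_2310, lcv_2311, lcv_2312, lcv_2313, lcv_2320, lcv_2321, lcv_2322, lcv_2323, lcv_2330, lcv_2331, lcv_2332, lcv_2333,
    zero_smul, add_zero, zero_add, one_smul, neg_smul, mul_assoc]
  simp (config := { decide := true }) only [low_sort3, low_sq3, low_sort, aLow_sq,
    mul_neg, neg_neg, mul_zero, neg_zero, add_zero, zero_add, neg_add_rev]
  module

lemma fermSbar_eq_3 : fermSbar 3 = -(aLow 0 * (aLow 1 * aLow 2)) := by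
  rw [fermSbar]
  simp only [Fin.sum_univ_four, lcv_3000, lcv_3001, lcv_3002, lcv_3003, lcv_3010, lcv_3011, lcv_3012, lcv_3013, lcv_3020, lcv_3021, lcv_3022, lcv_3023, lcv_3030, lcv_3031, lcv_3032, lcv_3033, lcv_3100, lcv_3101, lcv_3102, lcv_3103, lcv_3110, lcv_3111, lcv_3112, lcv_3113, lcv_3120, lcv_3121, lcv_3122, lcv_3123, lcv_3130, lcv_3131, lcv_3132, lcv_3133, lcv_3200, lcv_3201, lcv_3202, lcv_3203, lcv_3210, lcv_3211, lcv_3212, lcv_3213, lcv_3220, lcv_3221, lcv_3222, lcv_3223, lcv_3230, lcv_3231, lcv_3232, lcv_3233, lcv_3300, lcv_3301, lcv_3302, lcv_3303, lcv_3310, lcv_3311, lcv_3312, lcv_3313, lcv_3320, lcv_3321, lcv_3322, lcv_3323, lcv_3330, lcv_3331, lcv_3332, lcv_3333,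
    zero_smul, add_zero, zero_add, one_smul, neg_smul, mul_assoc]
  simp (config := { decide := true }) only [low_sort3, low_sq3, low_sort, aLow_sq,
    mul_neg, neg_neg, mul_zero, neg_zero, add_zero, zero_add, neg_add_rev]
  module

lemma fermS_eq_0 : fermS 0 = aUp 1 * (aUp 2 * aUp 3) := by
  rw [fermS]
  simp only [Fin.sum_univ_four, lcv_0000, lcv_0001, lcv_0002, lcv_0003, lcv_0010, lcv_0011, lcv_0012, lcv_0013, lcv_0020, lcv_0021, lcv_0022, lcv_0023, lcv_0030, lcv_0031, lcv_0032, lcv_0033, lcv_0100, lcv_0101, lcv_0102, lcv_0103, lcv_0110, lcv_0111, lcv_0112, lcv_0113, lcv_0120, lcv_0121, lcv_0122, lcv_0123, lcv_0130, lcv_0131, lcv_0132, lcv_0133, lcv_0200, lcv_0201, lcv_0202, lcv_0203, lcv_0210, lcv_0211, lcv_0212, lcv_0213, lcv_0220, lcv_0221, lcv_0222, lcv_0223, lcv_0230, lcv_0231, lcv_0232, lcv_0233, lcv_0300, lcv_0301, lcv_0302, lcv_0303, lcv_0310, lcv_0311, lcv_0312, lcv_0313, lcv_0320, lcv_0321,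 lcv_0322, lcv_0323, lcv_0330, lcv_0331, lcv_0332, lcv_0333,
    zero_smul, add_zero, zero_add, one_smul, neg_smul, mul_assoc]
  simp (config := { decide := true }) only [up_sort3, up_sq3, up_sort, aUp_sq,
    mul_neg, neg_neg, mul_zero, neg_zero, add_zero, zero_add, neg_add_rev]
  module

lemma fermS_eq_1 : fermS 1 = -(aUp 0 * (aUp 2 * aUp 3)) := by
  rw [fermS]
  simp only [Fin.sum_univ_four, lcv_1000, lcv_1001, lcv_1002, lcv_1003, lcv_1010, lcv_1011, lcv_1012, lcv_1013, lcv_1020, lcv_1021, lcv_1022, lcv_1023, lcv_1030, lcv_1031, lcv_1032, lcv_1033, lcv_1100, lcv_1101, lcv_1102, lcv_1103, lcv_1110, lcv_1111, lcv_1112, lcv_1113, lcv_1120, lcv_1121, lcv_1122, lcv_1123, lcv_1130, lcv_1131, lcv_1132, lcv_1133, lcv_1200, lcv_1201, lcv_1202, lcv_1203, lcv_1210, lcv_1211, lcv_1212, lcv_1213, lcv_1220, lcv_1221, lcv_1222, lcv_1223, lcv_1230, lcv_1231, lcv_1232, lcv_1233, lcv_1300, lcv_1301, lcv_1302, lcv_1303,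 lcv_1310, lcv_1311, lcv_1312, lcv_1313, lcv_1320, lcv_1321, lcv_1322, lcv_1323, lcv_1330, lcv_1331, lcv_1332, lcv_1333,
    zero_smul, add_zero, zero_add, one_smul, neg_smul, mul_assoc]
  simp (config := { decide := true }) only [up_sort3, up_sq3, up_sort, aUp_sq,
    mul_neg, neg_neg, mul_zero, neg_zero, add_zero, zero_add, neg_add_rev]
  module

lemma fermS_eq_2 : fermS 2 = aUp 0 * (aUp 1 * aUp 3) := by
  rw [fermS]
  simp only [Fin.sum_univ_four, lcv_2000, lcv_2001, lcv_2002, lcv_2003, lcv_2010, lcv_2011, lcv_2012, lcv_2013, lcv_2020, lcv_2021, lcv_2022, lcv_2023, lcv_2030, lcv_2031, lcv_2032, lcv_2033, lcv_2100, lcv_2101, lcv_2102, lcv_2103, lcv_2110, lcv_2111, lcv_2112, lcv_2113, lcv_2120, lcv_2121, lcv_2122, lcv_2123, lcv_2130, lcv_2131, lcv_2132, lcv_2133, lcv_2200, lcv_2201, lcv_2202, lcv_2203, lcv_2210, lcv_2211, lcv_2212, lcv_2213, lcv_2220, lcv_2221, lcv_2222, lcv_2223, lcv_2230, lcv_2231,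 lcv_2232, lcv_2233, lcv_2300, lcv_2301, lcv_2302, lcv_2303, lcv_2310, lcv_2311, lcv_2312, lcv_2313, lcv_2320, lcv_2321, lcv_2322, lcv_2323, lcv_2330, lcv_2331, lcv_2332, lcv_2333,
    zero_smul, add_zero, zero_add, one_smul, neg_smul, mul_assoc]
  simp (config := { decide := true }) only [up_sort3, up_sq3, up_sort, aUp_sq,
    mul_neg, neg_neg, mul_zero, neg_zero, add_zero, zero_add, neg_add_rev]
  module

lemma fermS_eq_3 : fermS 3 = -(aUp 0 * (aUp 1 * aUp 2)) := by
  rw [fermS]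
  simp only [Fin.sum_univ_four, lcv_3000, lcv_3001, lcv_3002, lcv_3003, lcv_3010, lcv_3011, lcv_3012, lcv_3013, lcv_3020, lcv_3021, lcv_3022, lcv_3023, lcv_3030, lcv_3031, lcv_3032, lcv_3033, lcv_3100, lcv_3101, lcv_3102, lcv_3103, lcv_3110, lcv_3111, lcv_3112, lcv_3113, lcv_3120, lcv_3121, lcv_3122, lcv_3123, lcv_3130, lcv_3131, lcv_3132, lcv_3133, lcv_3200, lcv_3201, lcv_3202, lcv_3203, lcv_3210, lcv_3211, lcv_3212, lcv_3213, lcv_3220, lcv_3221, lcv_3222, lcv_3223, lcv_3230, lcv_3231, lcv_3232, lcv_3233, lcv_3300, lcv_3301, lcv_3302, lcv_3303, lcv_3310, lcv_3311, lcv_3312, lcv_3313, lcv_3320, lcv_3321, lcv_3322, lcv_3323, lcv_3330, lcv_3331, lcv_3332, lcv_3333,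
    zero_smul, add_zero, zero_add, one_smul, neg_smul, mul_assoc]
  simp (config := { decide := true }) only [up_sort3, up_sq3, up_sort, aUp_sq,
    mul_neg, neg_neg, mul_zero, neg_zero, add_zero, zero_add, neg_add_rev]
  module

set_option maxHeartbeats 1000000 in
lemma part1 (i j k : Fin 4) :
    fermE i j * fermSbar k - fermSbar k * fermE i j =
      (if k = j then fermSbar i else 0) - (if i = j then fermSbar k else 0) := by
  have h4 : ∀ n : Fin 4, n = 0 ∨ n = 1 ∨ n = 2 ∨ n = 3 := by decide
  rcases h4 i with rfl | rfl | rfl | rfl <;> rcases h4 j with rfl | rfl | rfl | rfl <;>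
    rcases h4 k with rfl | rfl | rfl | rfl <;>
  · simp (config := { decide := true }) only [fermE,
      fermSbar_eq_0, fermSbar_eq_1, fermSbar_eq_2, fermSbar_eq_3,
      fermS_eq_0, fermS_eq_1, fermS_eq_2, fermS_eq_3,
      if_true, if_false,
      mul_assoc, low_up_eq3, low_up_ne3, low_up_eq, low_up_ne,
      low_sort3, low_sq3, low_sort, aLow_sq, up_sort3, up_sq3, up_sort, aUp_sq,
      mul_neg, neg_mul, mul_sub, sub_mul, mul_add, add_mul, mul_one, one_mul,
      mul_zero, zero_mul, neg_neg, sub_zero, zero_sub, add_zero, zero_add, neg_zero]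
    try abel

set_option maxHeartbeats 1000000 in
lemma part2 (i j k : Fin 4) :
    fermE i j * fermS k - fermS k * fermE i j =
      -(if i = k then fermS j else 0) + (if i = j then fermS k else 0) := by
  have h4 : ∀ n : Fin 4, n = 0 ∨ n = 1 ∨ n = 2 ∨ n = 3 := by decide
  rcases h4 i with rfl | rfl | rfl | rfl <;> rcases h4 j with rfl | rfl | rfl | rfl <;>
    rcases h4 k with rfl | rfl | rfl | rfl <;>
  · rw [neg_add_eq_sub]
    simp (config := { decide := true }) only [fermE,
      fermSbar_eq_0, fermSbar_eq_1, fermSbar_eq_2, fermSbar_eq_3,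
      fermS_eq_0, fermS_eq_1, fermS_eq_2, fermS_eq_3,
      if_true, if_false,
      mul_assoc, low_up_eq3, low_up_ne3, low_up_eq, low_up_ne,
      low_sort3, low_sq3, low_sort, aLow_sq, up_sort3, up_sq3, up_sort, aUp_sq,
      mul_neg, neg_mul, mul_sub, sub_mul, mul_add, add_mul, mul_one, one_mul,
      mul_zero, zero_mul, neg_neg, sub_zero, zero_sub, add_zero, zero_add, neg_zero]
    try abel

/-- The odd generators of the fermionic oscillator realization transform as `gl(4)`
densities of weight `1`:
`[E^i_j, S̄^k] = δ^k_j S̄^i − δ^i_j S̄^k` and `[E^i_j, S_k] = −δ^i_k S_j + δ^i_j S_k`. -/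
theorem fermE_fermS_commutation (i j k : Fin 4) :
    fermE i j * fermSbar k - fermSbar k * fermE i j =
      (if k = j then fermSbar i else 0) - (if i = j then fermSbar k else 0) ∧
    fermE i j * fermS k - fermS k * fermE i j =
      -(if i = k then fermS j else 0) + (if i = j then fermS k else 0) := by
  exact ⟨part1 i j k, part2 i j k⟩
end

section
/- Let gl(4,ℂ) be the Lie algebra of 4×4 complex matrices with commutator bracket and matrix units E_{ab}. Let V be a Lie module over gl(4,ℂ) and v ∈ V with E_{ab} ⬝ v = 0 for all a > b, E_{aa} ⬝ v = μ_a • v for scalars μ_1,…,μ_4 ∈ ℂ, and additionally E_{12} ⬝ v = 0. Let W = ℂ⁴ with action X ⬝ w = −Xᵀ w and standard basis w_1,…,w_4. Then in the tensor product Lie module W ⊗ V, the vector Λ₃ := (μ_3 − μ_2) • (w_3 ⊗ v) + w_2 ⊗ (E_{23} ⬝ v) + w_1 ⊗ (E_{13} ⬝ v) is annihilated by E_{21}, E_{32}, and E_{43}. -/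
open scoped BigOperators TensorProduct

attribute [local instance 100] LieRing.ofAssociativeRing

/-- The matrix unit `E_{ab}` of `gl(4,ℂ)`. -/
noncomputable def glE (a b : Fin 4) : Matrix (Fin 4) (Fin 4) ℂ :=
  Matrix.single a b 1

/-- The contragredient fundamental module `W = ℂ⁴` of `gl(4,ℂ)`,
with action `X ⬝ w = −X.transpose w`. -/
noncomputable instance contragredientLieRingModule :
    LieRingModule (Matrix (Fin 4) (Fin 4) ℂ) (Fin 4 → ℂ) where
  bracket X w := -(X.transpose.mulVec w)
  add_lie X Y w := by
    show -((X+Y).transpose.mulVec w) = -(X.transpose.mulVec w) + -(Y.transpose.mulVec w)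
    rw [Matrix.transpose_add, Matrix.add_mulVec]; abel
  lie_add X w w' := by
    show -(X.transpose.mulVec (w + w')) = -(X.transpose.mulVec w) + -(X.transpose.mulVec w')
    rw [Matrix.mulVec_add]; abel
  leibniz_lie X Y w := by
    show -(X.transpose.mulVec (-(Y.transpose.mulVec w))) =
      -((⁅X, Y⁆).transpose.mulVec w) + -(Y.transpose.mulVec (-(X.transpose.mulVec w)))
    simp only [Ring.lie_def, Matrix.transpose_sub, Matrix.transpose_mul,
      Matrix.sub_mulVec, Matrix.mulVec_neg, Matrix.mulVec_mulVec, neg_neg, neg_sub]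
    abel

noncomputable instance contragredientLieModule :
    LieModule ℂ (Matrix (Fin 4) (Fin 4) ℂ) (Fin 4 → ℂ) where
  smul_lie t X w := by
    show -((t • X).transpose.mulVec w) = t • -(X.transpose.mulVec w)
    rw [Matrix.transpose_smul, Matrix.smul_mulVec, smul_neg]
  lie_smul t X w := by
    show -(X.transpose.mulVec (t • w)) = t • -(X.transpose.mulVec w)
    rw [Matrix.mulVec_smul, smul_neg]

/-- The standard basis vectors `w_c` of the contragredient module `W`. -/
noncomputable def wvec (c : Fin 4) : Fin 4 → ℂ := Pi.single c 1

lemma wlie (a b c : Fin 4) :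
    ⁅glE a b, wvec c⁆ = if a = c then -wvec b else 0 := by
  show -((glE a b).transpose.mulVec (wvec c)) = _
  funext i
  simp [glE, wvec, Matrix.mulVec, dotProduct, Matrix.single, Pi.single_apply]
  split_ifs <;> simp_all

lemma glE_mul (a b c d : Fin 4) :
    glE a b * glE c d = if b = c then glE a d else 0 := by
  unfold glE
  split_ifs with h
  · subst h; simp [Matrix.single_mul_single_same]
  · exact Matrix.single_mul_single_of_ne (c := (1:ℂ)) a b c h 1

lemma glE_lie (a b c d : Fin 4) :
    ⁅glE a b, glE c d⁆ =
      (if b = c then glE a d else 0) - (if d = a then glE c b else 0) := by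
  rw [Ring.lie_def, glE_mul, glE_mul]

/-- If `v` is a lowest-weight vector of `gl(4,ℂ)` with lowest weight `μ` which in
addition satisfies `E_{12} ⬝ v = 0` (the case `j₁ = 0`), then in `W ⊗ V` (`W` the
contragredient fundamental module) the candidate vector
`Λ₃ = (μ₃ − μ₂) • (w₃ ⊗ v) + w₂ ⊗ (E_{23} ⬝ v) + w₁ ⊗ (E_{13} ⬝ v)` is annihilated
by the simple lowering operators `E_{21}`, `E_{32}`, `E_{43}` (indices `0`-based). -/
theorem lambda_three_lowest_weight (V : Type*) [AddCommGroup V] [Module ℂ V]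
    [LieRingModule (Matrix (Fin 4) (Fin 4) ℂ) V]
    [LieModule ℂ (Matrix (Fin 4) (Fin 4) ℂ) V]
    (v : V) (μ : Fin 4 → ℂ)
    (hlow : ∀ a b : Fin 4, b < a → ⁅glE a b, v⁆ = 0)
    (hdiag : ∀ a : Fin 4, ⁅glE a a, v⁆ = μ a • v)
    (hE12 : ⁅glE 0 1, v⁆ = 0) :
    ⁅glE 1 0, (μ 2 - μ 1) • (wvec 2 ⊗ₜ[ℂ] v) + wvec 1 ⊗ₜ[ℂ] ⁅glE 1 2, v⁆ +
        wvec 0 ⊗ₜ[ℂ] ⁅glE 0 2, v⁆⁆ = 0 ∧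
    ⁅glE 2 1, (μ 2 - μ 1) • (wvec 2 ⊗ₜ[ℂ] v) + wvec 1 ⊗ₜ[ℂ] ⁅glE 1 2, v⁆ +
        wvec 0 ⊗ₜ[ℂ] ⁅glE 0 2, v⁆⁆ = 0 ∧
    ⁅glE 3 2, (μ 2 - μ 1) • (wvec 2 ⊗ₜ[ℂ] v) + wvec 1 ⊗ₜ[ℂ] ⁅glE 1 2, v⁆ +
        wvec 0 ⊗ₜ[ℂ] ⁅glE 0 2, v⁆⁆ = 0 := by
  have h10 : ⁅glE 1 0, v⁆ = 0 := hlow 1 0 (by decide)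
  have h21 : ⁅glE 2 1, v⁆ = 0 := hlow 2 1 (by decide)
  have h32 : ⁅glE 3 2, v⁆ = 0 := hlow 3 2 (by decide)
  have hs : ∀ (X : Matrix (Fin 4) (Fin 4) ℂ) (t : ℂ) (m : (Fin 4 → ℂ) ⊗[ℂ] V),
      ⁅X, t • m⁆ = t • ⁅X, m⁆ := fun X t m => lie_smul t X m
  refine ⟨?_, ?_, ?_⟩
  · have e1 : ⁅glE 1 0, ⁅glE 1 2, v⁆⁆ = 0 := by
      rw [leibniz_lie, glE_lie]
      simp [h10]
    have e2 : ⁅glE 1 0, ⁅glE 0 2, v⁆⁆ = ⁅glE 1 2, v⁆ := by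
      rw [leibniz_lie, glE_lie]
      simp [h10]
    simp only [lie_add, hs, TensorProduct.LieModule.lie_tmul_right, wlie, e1, e2, h10]
    simp [TensorProduct.neg_tmul]
  · have e1 : ⁅glE 2 1, ⁅glE 1 2, v⁆⁆ = (μ 2 - μ 1) • v := by
      rw [leibniz_lie, glE_lie]
      simp [h21, sub_lie, hdiag, sub_smul]
    have e2 : ⁅glE 2 1, ⁅glE 0 2, v⁆⁆ = 0 := by
      rw [leibniz_lie, glE_lie]
      simp [h21, sub_lie, hE12]
    simp only [lie_add, hs, TensorProduct.LieModule.lie_tmul_right, wlie, e1, e2, h21]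
    simp [TensorProduct.neg_tmul, TensorProduct.tmul_smul]
  · have e1 : ⁅glE 3 2, ⁅glE 1 2, v⁆⁆ = 0 := by
      rw [leibniz_lie, glE_lie]
      simp [h32]
    have e2 : ⁅glE 3 2, ⁅glE 0 2, v⁆⁆ = 0 := by
      rw [leibniz_lie, glE_lie]
      simp [h32]
    simp only [lie_add, hs, TensorProduct.LieModule.lie_tmul_right, wlie, e1, e2, h32]
    simp
end
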